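/- arXiv:math/0412438 — 4 statements merged into one kernel-verified Lean document; each statement's English description precedes it below -/
import Mathlib

section
/- Let (μ_k) be a sequence of barycentered Borel probability measures on S² converging weakly to a Borel probability measure μ. Then either μ is barycentered, or there exists a ∈ S² such that μ = (1/2)δ_a + (1/2)δ_{−a}. -/
noncomputable section

open MeasureTheory Filter Topology
open scoped ENNReal RealInnerProductSpace

/-- Euclidean 3-space. -/
abbrev E3 : Type := EuclideanSpace ℝ (Fin 3)

/-- The unit sphere `S²` in `ℝ³`. -/
abbrev S2 : Type := Metric.sphere (0 : E3) 1

/-- A Borel probability measure on the sphere is *barycentered* if every atom has mass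
less than `1/2` and its Euclidean center of mass is the origin (equivalently, by
Douady–Earle, its conformal barycenter is the origin). -/
def IsBarycentered (μ : ProbabilityMeasure S2) : Prop :=
  (∀ x : S2, (μ : Measure S2) {x} < 1 / 2) ∧
    (∫ x : S2, (x : E3) ∂(μ : Measure S2)) = 0

/-- The antipode `-x` of a point `x ∈ S²`. -/
def antipode (x : S2) : S2 :=
  ⟨-(x : E3), by
    rw [mem_sphere_zero_iff_norm, norm_neg]
    exact mem_sphere_zero_iff_norm.mp x.2⟩

lemma S2_norm (x : S2) : ‖(x : E3)‖ = 1 := mem_sphere_zero_iff_norm.mp x.2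

lemma integrable_coe_S2 (M : Measure S2) [IsFiniteMeasure M] :
    Integrable (fun x : S2 => (x : E3)) M :=
  continuous_subtype_val.integrable_of_hasCompactSupport
    (HasCompactSupport.of_compactSpace _)

lemma integrable_inner_S2 (b : E3) (M : Measure S2) [IsFiniteMeasure M] :
    Integrable (fun x : S2 => ⟪b, (x : E3)⟫) M :=
  (continuous_const.inner continuous_subtype_val).integrable_of_hasCompactSupport
    (HasCompactSupport.of_compactSpace _)

/-- If a sequence of barycentered probability measures on `S²` converges weakly to a
probability measure `μ`, then either `μ` is barycentered, or
`μ = (1/2) δ_a + (1/2) δ_{-a}` for some `a ∈ S²`. -/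
theorem limit_of_barycentered_sequence
    (μk : ℕ → ProbabilityMeasure S2) (hbc : ∀ k, IsBarycentered (μk k))
    (μ : ProbabilityMeasure S2) (hμ : Tendsto μk atTop (𝓝 μ)) :
    IsBarycentered μ ∨ ∃ a : S2,
      (μ : Measure S2) =
        (1 / 2 : ℝ≥0∞) • Measure.dirac a + (1 / 2 : ℝ≥0∞) • Measure.dirac (antipode a) := by
  -- Step 1: the barycenter of μ vanishes.
  have h0 : (∫ x : S2, (x : E3) ∂(μ : Measure S2)) = 0 := by
    apply integral_eq_zero_of_forall_integral_inner_eq_zero ℝ _ (integrable_coe_S2 _)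
    intro c
    set f : BoundedContinuousFunction S2 ℝ :=
      BoundedContinuousFunction.mkOfCompact
        ⟨fun x => ⟪c, (x : E3)⟫, continuous_const.inner continuous_subtype_val⟩ with hf
    have h1 := ProbabilityMeasure.tendsto_iff_forall_integral_tendsto.mp hμ f
    have h2 : ∀ k, (∫ x, f x ∂((μk k) : Measure S2)) = 0 := by
      intro k
      have h3 := integral_inner (𝕜 := ℝ) (integrable_coe_S2 ((μk k) : Measure S2)) c
      have h4 : (∫ x, f x ∂((μk k) : Measure S2))
          = ∫ x : S2, ⟪c, (x : E3)⟫ ∂((μk k) : Measure S2) := rfl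
      rw [h4, h3, (hbc k).2]
      simp
    simp only [h2] at h1
    have h5 : (∫ x, f x ∂(μ : Measure S2)) = 0 :=
      tendsto_nhds_unique h1 tendsto_const_nhds
    have h6 : (∫ x, f x ∂(μ : Measure S2))
        = ∫ x : S2, ⟪c, (x : E3)⟫ ∂(μ : Measure S2) := rfl
    rw [← h6, h5]
  by_cases hA : ∀ x : S2, (μ : Measure S2) {x} < 1 / 2
  · exact Or.inl ⟨hA, h0⟩
  push_neg at hA
  obtain ⟨a, ha⟩ := hA
  right
  refine ⟨a, ?_⟩
  set M : Measure S2 := (μ : Measure S2) with hM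
  set c : ℝ≥0∞ := M {a} with hc
  have hc_ne_top : c ≠ ∞ := (measure_lt_top M _).ne
  have hc_le_one : c ≤ 1 := prob_le_one
  set ν : Measure S2 := M.restrict {a}ᶜ with hν
  have hmeas : MeasurableSet ({a} : Set S2) := measurableSet_singleton a
  have hνfin : IsFiniteMeasure ν :=
    ⟨lt_of_le_of_lt (Measure.restrict_le_self _) (measure_lt_top M _)⟩
  set r : ℝ := c.toReal with hr
  have hr_half : (1/2 : ℝ) ≤ r := by
    have : ((1:ℝ≥0∞)/2).toReal ≤ c.toReal := ENNReal.toReal_mono hc_ne_top ha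
    simpa using this
  -- mass of the complement
  have hν_univ : ν Set.univ = 1 - c := by
    rw [hν, Measure.restrict_apply_univ, measure_compl hmeas (measure_ne_top M _)]
    congr 1
    simp [hM]
  have hν_univ_real : (ν Set.univ).toReal = 1 - r := by
    rw [hν_univ, ENNReal.toReal_sub_of_le hc_le_one ENNReal.one_ne_top, ENNReal.toReal_one]
  -- split the integral
  have hsplit : (∫ x in ({a} : Set S2), (x : E3) ∂M) + (∫ x in ({a} : Set S2)ᶜ, (x : E3) ∂M)
      = ∫ x : S2, (x : E3) ∂M := integral_add_compl hmeas (integrable_coe_S2 M)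
  have hatom : (∫ x in ({a} : Set S2), (x : E3) ∂M) = r • (a : E3) := by
    rw [Measure.restrict_singleton, integral_smul_measure, integral_dirac]
  set v : E3 := ∫ x, (x : E3) ∂ν with hv
  have hveq : v = -(r • (a : E3)) := by
    have h8 := eq_neg_of_add_eq_zero_right (hsplit.trans h0)
    rwa [hatom] at h8
  -- norm estimates
  have hnorm_v : ‖v‖ = r := by
    rw [hveq, norm_neg, norm_smul, S2_norm, Real.norm_eq_abs,
      abs_of_nonneg (by linarith), mul_one]
  have hbound : ‖v‖ ≤ 1 - r := by
    calc ‖v‖ ≤ ∫ x : S2, ‖(x : E3)‖ ∂ν := norm_integral_le_integral_norm _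
    _ = (ν Set.univ).toReal := by
        simp only [S2_norm]
        rw [integral_const, smul_eq_mul, mul_one, measureReal_def]
    _ = 1 - r := hν_univ_real
  have hr_eq : r = 1/2 := by rw [hnorm_v] at hbound; linarith
  have hc_eq : c = 1/2 := by
    have h2 : ((1:ℝ≥0∞)/2).toReal = (1/2 : ℝ) := by simp
    rw [← ENNReal.toReal_eq_toReal_iff' hc_ne_top (by norm_num), h2, ← hr, hr_eq]
  -- the equality case: ν is concentrated at the antipode
  set b : S2 := antipode a with hb
  have hbcoe : (b : E3) = -(a : E3) := rfl
  have hvb : v = (1/2 : ℝ) • (b : E3) := by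
    rw [hveq, hr_eq, hbcoe, smul_neg]
  have hg_int : Integrable (fun x : S2 => 1 - ⟪(b : E3), (x : E3)⟫) ν :=
    (integrable_const 1).sub (integrable_inner_S2 _ _)
  have hg_nonneg : ∀ x : S2, 0 ≤ 1 - ⟪(b : E3), (x : E3)⟫ := by
    intro x
    have := real_inner_le_norm (b : E3) (x : E3)
    rw [S2_norm, S2_norm, one_mul] at this
    linarith
  have hg_zero : (∫ x : S2, (1 - ⟪(b : E3), (x : E3)⟫) ∂ν) = 0 := by
    rw [integral_sub (integrable_const 1) (integrable_inner_S2 _ _),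
      integral_inner (integrable_coe_S2 ν), ← hv, hvb, integral_const, smul_eq_mul, mul_one,
      measureReal_def, hν_univ_real, hr_eq, real_inner_smul_right, real_inner_self_eq_norm_sq, S2_norm]
    norm_num
  have hae : ∀ᵐ x ∂ν, x = b := by
    have h7 := (integral_eq_zero_iff_of_nonneg hg_nonneg hg_int).mp hg_zero
    filter_upwards [h7] with x hx
    have hx1 : ⟪(b : E3), (x : E3)⟫ = 1 := by
      have : (1 : ℝ) - ⟪(b : E3), (x : E3)⟫ = 0 := hx
      linarith
    have := (inner_eq_one_iff_of_norm_eq_one (S2_norm b) (S2_norm x)).mp hx1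
    exact (Subtype.ext this).symm
  have hν_compl : ν ({b} : Set S2)ᶜ = 0 := by
    have h9 := ae_iff.mp hae
    simpa [Set.compl_def] using h9
  have hν_b : ν {b} = 1/2 := by
    have h10 := measure_add_measure_compl (μ := ν) (measurableSet_singleton b)
    rw [hν_compl, add_zero, hν_univ, hc_eq] at h10
    rw [h10, one_div]
    exact ENNReal.one_sub_inv_two
  have hν_eq : ν = (1/2 : ℝ≥0∞) • Measure.dirac b := by
    have := Measure.restrict_add_restrict_compl (μ := ν) (measurableSet_singleton b)
    rw [Measure.restrict_eq_zero.mpr hν_compl, add_zero, Measure.restrict_singleton, hν_b]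
      at this
    exact this.symm
  have hMsplit := Measure.restrict_add_restrict_compl (μ := M) hmeas
  rw [Measure.restrict_singleton, ← hc, hc_eq, ← hν, hν_eq] at hMsplit
  exact hMsplit.symm
end
end

section
/- Let d ≥ 2 be even and let f be a degree-d pair with f ∉ I(d); then f^n is a nonzero pair for every n ≥ 1. Moreover, f^n is stable for every n ≥ 1 if and only if d_h(f^n) ≤ d^n/2 for every n ≥ 1 and every h ∈ ℙ¹(ℂ). -/
noncomputable section

open MvPolynomial

/-- Polynomials in the two variables `z = X 0` and `w = X 1` over `ℂ`. -/
abbrev MvPoly2 : Type := MvPolynomial (Fin 2) ℂ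

/-- A pair of polynomials, representing a point of `Ratbar_d` when both entries are
homogeneous of degree `d` and not both zero. -/
abbrev Pair : Type := MvPoly2 × MvPoly2

/-- `f` is a degree-`d` pair: both entries homogeneous of degree `d`, not both zero. -/
def IsDegPair (d : ℕ) (f : Pair) : Prop :=
  f.1.IsHomogeneous d ∧ f.2.IsHomogeneous d ∧ f ≠ 0

/-- Composition of pairs: substitute the components of `g` into `f`. -/
def comp (f g : Pair) : Pair :=
  (aeval ![g.1, g.2] f.1, aeval ![g.1, g.2] f.2)

/-- The identity pair `(z, w)`. -/
def idPair : Pair := (X 0, X 1)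

/-- Iterates: `iter f n = f^n`, the `n`-fold self-composition, with `f^0` the identity. -/
def iter (f : Pair) : ℕ → Pair
  | 0 => idPair
  | n + 1 => comp f (iter f n)

/-- The linear form `β z - α w` vanishing at the point `(α : β)` of `ℙ¹`. -/
def linForm (v : ℂ × ℂ) : MvPoly2 := C v.2 * X 0 - C v.1 * X 1

/-- Order of vanishing of the linear form of `v` in a polynomial `P`. -/
def ord (v : ℂ × ℂ) (P : MvPoly2) : ℕ := sSup {n : ℕ | linForm v ^ n ∣ P}

/-- Depth of `v` as a hole of `f`: the multiplicity of `linForm v` in `gcd (f.1, f.2)`. -/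
def depth (v : ℂ × ℂ) (f : Pair) : ℕ :=
  sSup {n : ℕ | linForm v ^ n ∣ f.1 ∧ linForm v ^ n ∣ f.2}

/-- The homogeneous form `z Q - w P`, whose vanishing at `v` beyond the depth of the
hole detects that the reduced map fixes `v`. -/
def fixedForm (f : Pair) : MvPoly2 := X 0 * f.2 - X 1 * f.1

/-- `φ_f(v) = v` in the sense of the paper: the multiplicity of `v` as a root of
`z Q - w P` strictly exceeds the depth of `v` as a hole of `f`. -/
def FixedHole (v : ℂ × ℂ) (f : Pair) : Prop := depth v f < ord v (fixedForm f)

/-- Stability with cutoff `m`: all holes have depth at most `m` and no hole of depth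
exactly `m` is fixed by the reduced map. -/
def StableAt (m : ℕ) (f : Pair) : Prop :=
  f ≠ 0 ∧ ∀ v : ℂ × ℂ, v ≠ 0 →
    depth v f ≤ m ∧ (0 < depth v f → depth v f = m → ¬ FixedHole v f)

/-- GIT stability of a degree-`d` pair. -/
def Stable (d : ℕ) (f : Pair) : Prop :=
  if d % 2 = 0 then StableAt (d / 2) f else StableAt ((d - 1) / 2) f

/-- GIT semistability of a degree-`d` pair. -/
def Semistable (d : ℕ) (f : Pair) : Prop :=
  if d % 2 = 0 then StableAt (d / 2) f else StableAt ((d + 1) / 2) f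

/-- The indeterminacy locus: `f ∈ I(d)` iff `f ∘ f` is the zero pair. -/
def IsIndet (f : Pair) : Prop := comp f f = 0

/-- The degree-1 pair `(az + bw, cz + dw)` associated to a `2 × 2` matrix. -/
def matPair (A : Matrix (Fin 2) (Fin 2) ℂ) : Pair :=
  (C (A 0 0) * X 0 + C (A 0 1) * X 1, C (A 1 0) * X 0 + C (A 1 1) * X 1)

/-- Conjugacy of pairs: `g` is a nonzero scalar multiple of `A ∘ f ∘ A⁻¹` for some
`A ∈ GL₂(ℂ)`. -/
def Conjugate (f g : Pair) : Prop :=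
  ∃ A : Matrix.GeneralLinearGroup (Fin 2) ℂ, ∃ c : ℂ, c ≠ 0 ∧
    g = c • comp (matPair (A : Matrix (Fin 2) (Fin 2) ℂ))
        (comp f (matPair ((A⁻¹ : Matrix.GeneralLinearGroup (Fin 2) ℂ) : Matrix (Fin 2) (Fin 2) ℂ)))

namespace Aux

lemma comp_vec {A B : Type*} (F : A → B) (x y : A) :
    (fun i => F (![x, y] i)) = ![F x, F y] := by
  funext i; fin_cases i <;> simp

lemma hom_aeval_pair {A B : Type*} [CommSemiring A] [Algebra ℂ A] [CommSemiring B]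
    [Algebra ℂ B] (φ : A →ₐ[ℂ] B) (g1 g2 : A) (P : MvPoly2) :
    φ (aeval ![g1, g2] P) = aeval ![φ g1, φ g2] P := by
  rw [← comp_vec φ g1 g2, ← comp_aeval]; rfl

lemma prod_support_two {A : Type*} [CommMonoid A] (d : Fin 2 →₀ ℕ) (g : Fin 2 → A) :
    (∏ i ∈ d.support, g i ^ d i) = g 0 ^ d 0 * g 1 ^ d 1 := by
  rw [Finset.prod_subset (Finset.subset_univ _) (fun x _ hx => by
    simp [Finsupp.notMem_support_iff.mp hx]), Fin.prod_univ_two]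

lemma comp_idPair (f : Pair) : comp f idPair = f := by
  have h : (![X 0, X 1] : Fin 2 → MvPoly2) = X := by
    funext i; fin_cases i <;> simp
  simp [comp, idPair, h]

lemma idPair_comp (g : Pair) : comp idPair g = g := by
  simp [comp, idPair]

lemma comp_assoc (a b c : Pair) : comp (comp a b) c = comp a (comp b c) := by
  unfold comp
  refine Prod.ext ?_ ?_ <;> simp only <;>
    rw [hom_aeval_pair (aeval ![c.1, c.2]) b.1 b.2]

lemma iter_add (f : Pair) (m n : ℕ) : iter f (m + n) = comp (iter f m) (iter f n) := by
  induction m with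
  | zero => simp [iter, idPair_comp]
  | succ m ih =>
      have : m + 1 + n = (m + n) + 1 := by omega
      rw [this, iter, ih, iter, comp_assoc]

lemma degree_sum {P : MvPoly2} {m : ℕ} (hP : P.IsHomogeneous m) {d : Fin 2 →₀ ℕ}
    (hd : coeff d P ≠ 0) : d 0 + d 1 = m := by
  have h := hP hd
  rw [Finsupp.weight_apply, Finsupp.sum] at h
  have h2 : ∑ i ∈ d.support, d i = m := by
    rw [← h]; apply Finset.sum_congr rfl; intro i _; simp
  have h3 : ∑ i ∈ d.support, d i = ∑ i : Fin 2, d i :=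
    Finset.sum_subset (Finset.subset_univ _)
      (fun x _ hx => Finsupp.notMem_support_iff.mp hx)
  rw [← h2, h3, Fin.sum_univ_two]


lemma aeval_scale {A : Type*} [CommSemiring A] [Algebra ℂ A] {P : MvPoly2} {m : ℕ}
    (hP : P.IsHomogeneous m) (c : A) (x : Fin 2 → A) :
    aeval (fun i => c * x i) P = c ^ m * aeval x P := by
  rw [aeval_def, aeval_def, eval₂_eq, eval₂_eq, Finset.mul_sum]
  apply Finset.sum_congr rfl
  intro d hd
  have hdeg := degree_sum hP (Finsupp.mem_support_iff.mp hd)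
  rw [prod_support_two, prod_support_two, mul_pow, mul_pow]
  rw [← hdeg, pow_add]
  ring

lemma pow_dvd_aeval {P : MvPoly2} {m k : ℕ} (hP : P.IsHomogeneous m) {L g1 g2 : MvPoly2}
    (h1 : L ^ k ∣ g1) (h2 : L ^ k ∣ g2) : L ^ (k * m) ∣ aeval ![g1, g2] P := by
  rw [aeval_def, eval₂_eq]
  apply Finset.dvd_sum
  intro d hd
  have hdeg := degree_sum hP (Finsupp.mem_support_iff.mp hd)
  rw [prod_support_two]
  have e1 : L ^ (k * d 0) ∣ (![g1, g2] 0) ^ (d 0) := by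
    rw [pow_mul]; exact pow_dvd_pow_of_dvd (by simpa using h1) _
  have e2 : L ^ (k * d 1) ∣ (![g1, g2] 1) ^ (d 1) := by
    rw [pow_mul]; exact pow_dvd_pow_of_dvd (by simpa using h2) _
  have : L ^ (k * m) ∣ (![g1, g2] 0) ^ (d 0) * (![g1, g2] 1) ^ (d 1) := by
    have := mul_dvd_mul e1 e2
    rwa [← pow_add, ← Nat.mul_add, hdeg] at this
  exact Dvd.dvd.mul_left this _

lemma aeval_C_pair (P : MvPoly2) (a b : ℂ) :
    aeval ![(C a : MvPoly2), C b] P = (C (aeval ![a, b] P) : MvPoly2) := by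
  have h := hom_aeval_pair (A := ℂ) (B := MvPoly2) (Algebra.ofId ℂ MvPoly2) a b P
  simpa [Algebra.ofId_apply, algebraMap_eq] using h.symm



lemma iter_homog {d : ℕ} {f : Pair} (h1 : f.1.IsHomogeneous d) (h2 : f.2.IsHomogeneous d)
    (n : ℕ) : (iter f n).1.IsHomogeneous (d ^ n) ∧ (iter f n).2.IsHomogeneous (d ^ n) := by
  induction n with
  | zero => exact ⟨by simpa [iter, idPair] using isHomogeneous_X ℂ (0 : Fin 2),
      by simpa [iter, idPair] using isHomogeneous_X ℂ (1 : Fin 2)⟩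
  | succ n ih =>
      have hg : ∀ i : Fin 2, (![(iter f n).1, (iter f n).2] i).IsHomogeneous (d ^ n) := by
        intro i; fin_cases i
        · simpa using ih.1
        · simpa using ih.2
      constructor
      · have := h1.aeval ![(iter f n).1, (iter f n).2] hg
        rw [pow_succ]
        simpa [iter, comp] using this
      · have := h2.aeval ![(iter f n).1, (iter f n).2] hg
        rw [pow_succ]
        simpa [iter, comp] using this

lemma linForm_homog (v : ℂ × ℂ) : (linForm v).IsHomogeneous 1 := by
  unfold linForm
  exact ((isHomogeneous_X ℂ (0 : Fin 2)).C_mul v.2).sub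
    ((isHomogeneous_X ℂ (1 : Fin 2)).C_mul v.1)

lemma linForm_prime_aux {v : ℂ × ℂ} (hv : v.2 ≠ 0) : Prime (linForm v) := by
  set e := finSuccEquiv ℂ 1
  have key : e (linForm v) =
      Polynomial.C (C v.2) * (Polynomial.X - Polynomial.C (C (v.1 * v.2⁻¹) * X 0)) := by
    unfold linForm
    rw [map_sub, map_mul, map_mul]
    have e0 : e (X 0) = Polynomial.X := finSuccEquiv_X_zero
    have e1 : e (X 1) = Polynomial.C (X 0) := by
      have h10 : (1 : Fin 2) = Fin.succ 0 := rfl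
      rw [h10, finSuccEquiv_X_succ]
    have eC : ∀ a : ℂ, e (C a) = Polynomial.C (C a) := by
      intro a; simp [e, finSuccEquiv_apply]
    have h3 : (C v.2 : MvPolynomial (Fin 1) ℂ) * (C (v.1 * v.2⁻¹) * X 0) = C v.1 * X 0 := by
      rw [← mul_assoc, ← map_mul]
      congr 2
      field_simp
    rw [e0, e1, eC, eC, mul_sub, ← Polynomial.C_mul, ← Polynomial.C_mul, h3]
  have hprime : Prime (e (linForm v)) := by
    rw [key]
    have hu : IsUnit (Polynomial.C (C v.2) :
        Polynomial (MvPolynomial (Fin 1) ℂ)) := by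
      apply IsUnit.of_mul_eq_one (Polynomial.C (C v.2⁻¹))
      rw [← map_mul, ← map_mul, mul_inv_cancel₀ hv, map_one, map_one]
    exact (associated_unit_mul_left _ _ hu).symm.prime (Polynomial.prime_X_sub_C _)
  have := (MulEquiv.prime_iff e.toRingEquiv.toMulEquiv (p := linForm v)).mp
  exact this (by exact hprime)

lemma linForm_prime {v : ℂ × ℂ} (hv : v ≠ 0) : Prime (linForm v) := by
  by_cases h2 : v.2 ≠ 0
  · exact linForm_prime_aux h2
  · push_neg at h2
    have h1 : v.1 ≠ 0 := by
      intro h; exact hv (Prod.ext h h2)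
    have hp : Prime (linForm (v.2, v.1)) := linForm_prime_aux (by simpa using h1)
    have key : (renameEquiv ℂ (Equiv.swap (0 : Fin 2) 1)) (linForm (v.2, v.1))
        = -(linForm v) := by
      unfold linForm
      rw [renameEquiv_apply, map_sub, map_mul, map_mul, rename_C, rename_C,
        rename_X, rename_X, Equiv.swap_apply_left, Equiv.swap_apply_right]
      ring
    have ht0 := (MulEquiv.prime_iff (renameEquiv ℂ (Equiv.swap (0 : Fin 2) 1)).toRingEquiv.toMulEquiv).mpr hp
    have hτ : Prime ((renameEquiv ℂ (Equiv.swap (0 : Fin 2) 1)) (linForm (v.2, v.1))) := ht0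
    rw [key] at hτ
    rw [← neg_neg (linForm v)]
    exact hτ.neg

lemma dvd_set_bddAbove {L p : MvPoly2} (hL : Prime L) (hp : p ≠ 0) :
    BddAbove {n : ℕ | L ^ n ∣ p} := by
  obtain ⟨k, hk⟩ := FiniteMultiplicity.of_not_isUnit hL.not_unit hp
  refine ⟨k, fun m hm => ?_⟩
  by_contra hmk
  push_neg at hmk
  exact hk (dvd_trans (pow_dvd_pow L (by omega)) hm)

lemma quotient_homog {Q A P : MvPoly2} {e m : ℕ} (hQ : Q.IsHomogeneous e)
    (hP : P.IsHomogeneous m) (hQ0 : Q ≠ 0) (hP0 : P ≠ 0) (hPA : P = Q * A) :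
    A.IsHomogeneous (m - e) := by
  classical
  set N := A.totalDegree + 1
  have hsum : (∑ i ∈ Finset.range N, homogeneousComponent i A) = A :=
    sum_homogeneousComponent A
  have hPm : homogeneousComponent m P = P := by
    have := homogeneousComponent_of_mem (m := m) (n := m) (mem_homogeneousSubmodule m P |>.mpr hP)
    simpa using this
  have hexp : P = ∑ i ∈ Finset.range N,
      (if m = e + i then Q * homogeneousComponent i A else 0) := by
    conv_lhs => rw [← hPm, hPA, ← hsum, Finset.mul_sum, map_sum]
    apply Finset.sum_congr rfl
    intro i _
    have hhom : (Q * homogeneousComponent i A).IsHomogeneous (e + i) :=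
      hQ.mul (homogeneousComponent_isHomogeneous i A)
    have := homogeneousComponent_of_mem (m := m) (n := e + i) (mem_homogeneousSubmodule _ _ |>.mpr hhom)
    simpa using this
  by_cases hem : e ≤ m
  · have hcond : ∀ i ∈ Finset.range N,
        (if m = e + i then Q * homogeneousComponent i A else 0)
          = (if i = m - e then Q * homogeneousComponent i A else 0) := by
      intro i _
      exact if_congr (by omega) rfl rfl
    rw [Finset.sum_congr rfl hcond, Finset.sum_ite_eq' (Finset.range N)] at hexp
    by_cases hmem : m - e ∈ Finset.range N
    · rw [if_pos hmem] at hexp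
      have hcancel : A = homogeneousComponent (m - e) A := by
        apply mul_left_cancel₀ hQ0
        rw [← hPA, hexp]
      rw [hcancel]
      exact homogeneousComponent_isHomogeneous _ _
    · rw [if_neg hmem] at hexp
      exact absurd hexp hP0
  · exfalso
    apply hP0
    rw [hexp]
    apply Finset.sum_eq_zero
    intro i _
    rw [if_neg (by omega)]





lemma depth_bddAbove {v : ℂ × ℂ} (hv : v ≠ 0) {f : Pair} (hf : f ≠ 0) :
    BddAbove {n : ℕ | linForm v ^ n ∣ f.1 ∧ linForm v ^ n ∣ f.2} := by
  have hL := linForm_prime hv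
  by_cases h1 : f.1 = 0
  · have h2 : f.2 ≠ 0 := by
      intro h; exact hf (Prod.ext h1 h)
    exact (dvd_set_bddAbove hL h2).mono (fun n hn => hn.2)
  · exact (dvd_set_bddAbove hL h1).mono (fun n hn => hn.1)

lemma depth_spec {v : ℂ × ℂ} (hv : v ≠ 0) {f : Pair} (hf : f ≠ 0) :
    linForm v ^ depth v f ∣ f.1 ∧ linForm v ^ depth v f ∣ f.2 :=
  Nat.sSup_mem ⟨0, by simp⟩ (depth_bddAbove hv hf)

lemma le_depth {v : ℂ × ℂ} (hv : v ≠ 0) {f : Pair} (hf : f ≠ 0) {n : ℕ}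
    (h1 : linForm v ^ n ∣ f.1) (h2 : linForm v ^ n ∣ f.2) : n ≤ depth v f :=
  le_csSup (depth_bddAbove hv hf) ⟨h1, h2⟩

lemma fixedHole_dvd {v : ℂ × ℂ} {f : Pair} (hfix : FixedHole v f) :
    linForm v ^ (depth v f + 1) ∣ fixedForm f := by
  obtain ⟨m, hm, hlt⟩ := exists_lt_of_lt_csSup ⟨0, by simp⟩ hfix
  exact dvd_trans (pow_dvd_pow _ (by omega)) hm

lemma linForm_dvd_X_impossible {v : ℂ × ℂ} (hv : v ≠ 0)
    (h0 : linForm v ∣ X 0) (h1 : linForm v ∣ X 1) : False := by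
  obtain ⟨s, hs⟩ := h0
  obtain ⟨t, ht⟩ := h1
  have e0 := congrArg (aeval ![v.1, v.2] : MvPoly2 →ₐ[ℂ] ℂ) hs
  have e1 := congrArg (aeval ![v.1, v.2] : MvPoly2 →ₐ[ℂ] ℂ) ht
  have hL : (aeval ![v.1, v.2] : MvPoly2 →ₐ[ℂ] ℂ) (linForm v) = 0 := by
    simp [linForm]; ring
  simp only [map_mul, hL, zero_mul, aeval_X] at e0 e1
  simp at e0 e1
  exact hv (Prod.ext e0 e1)

lemma depth_comp_self {v : ℂ × ℂ} (hv : v ≠ 0) {F : Pair} {k : ℕ}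
    (hF1 : F.1.IsHomogeneous (2 * k)) (hF2 : F.2.IsHomogeneous (2 * k)) (hF : F ≠ 0)
    (h1 : linForm v ^ k ∣ F.1) (h2 : linForm v ^ k ∣ F.2)
    (hfix : linForm v ^ (k + 1) ∣ fixedForm F) :
    linForm v ^ (2 * k * k + k) ∣ (comp F F).1 ∧
      linForm v ^ (2 * k * k + k) ∣ (comp F F).2 := by
  classical
  set L := linForm v with hLdef
  have hLp : Prime L := linForm_prime hv
  have hL0 : L ≠ 0 := hLp.ne_zero
  have hLh : L.IsHomogeneous 1 := linForm_homog v
  -- choose homogeneous cofactors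
  have hgetA : ∃ A : MvPoly2, F.1 = L ^ k * A ∧ A.IsHomogeneous k := by
    by_cases hF10 : F.1 = 0
    · exact ⟨0, by rw [hF10, mul_zero], isHomogeneous_zero (Fin 2) ℂ k⟩
    · obtain ⟨A, hA⟩ := h1
      refine ⟨A, hA, ?_⟩
      have hk2 : 2 * k - k = k := by omega
      have := quotient_homog (by simpa using hLh.pow k) hF1
        (pow_ne_zero _ hL0) hF10 hA
      rwa [hk2] at this
  have hgetB : ∃ B : MvPoly2, F.2 = L ^ k * B ∧ B.IsHomogeneous k := by
    by_cases hF20 : F.2 = 0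
    · exact ⟨0, by rw [hF20, mul_zero], isHomogeneous_zero (Fin 2) ℂ k⟩
    · obtain ⟨B, hB⟩ := h2
      refine ⟨B, hB, ?_⟩
      have hk2 : 2 * k - k = k := by omega
      have := quotient_homog (by simpa using hLh.pow k) hF2
        (pow_ne_zero _ hL0) hF20 hB
      rwa [hk2] at this
  obtain ⟨A, hA, hAh⟩ := hgetA
  obtain ⟨B, hB, hBh⟩ := hgetB
  set G : MvPoly2 := X 0 * B - X 1 * A with hGdef
  set D : MvPoly2 := C v.2 * A - C v.1 * B with hDdef
  have hffG : fixedForm F = L ^ k * G := by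
    rw [fixedForm, hA, hB, hGdef]; ring
  have hLG : L ∣ G := by
    rw [hffG, pow_succ] at hfix
    exact (mul_dvd_mul_iff_left (pow_ne_zero k hL0)).mp hfix
  have hLD : L ∣ D := by
    have i0 : X 0 * D = L * A - C v.1 * G := by
      rw [hDdef, hGdef, hLdef, linForm]; ring
    have i1 : X 1 * D = L * B - C v.2 * G := by
      rw [hDdef, hGdef, hLdef, linForm]; ring
    have d0 : L ∣ X 0 * D := by
      rw [i0]; exact dvd_sub (dvd_mul_right _ _) (Dvd.dvd.mul_left hLG _)
    have d1 : L ∣ X 1 * D := by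
      rw [i1]; exact dvd_sub (dvd_mul_right _ _) (Dvd.dvd.mul_left hLG _)
    rcases (hLp.dvd_mul.mp d0) with h | h
    · rcases (hLp.dvd_mul.mp d1) with h' | h'
      · exact absurd (linForm_dvd_X_impossible hv h h') (fun x => x)
      · exact h'
    · exact h
  -- the key divisibility of the scaled linear form
  have haevalL : aeval ![F.1, F.2] L = L ^ k * D := by
    have expand : aeval ![F.1, F.2] L = C v.2 * F.1 - C v.1 * F.2 := by
      rw [hLdef, linForm]
      simp only [map_sub, map_mul, aeval_X, aeval_C, algebraMap_eq]
      simp only [Matrix.cons_val_zero, Matrix.cons_val_one, Matrix.head_cons]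
    rw [expand, hA, hB, hDdef]; ring
  have hdvdL : L ^ (k + 1) ∣ aeval ![F.1, F.2] L := by
    rw [haevalL, pow_succ]
    exact mul_dvd_mul dvd_rfl hLD
  have main : ∀ (Pc : MvPoly2), Pc.IsHomogeneous k →
      L ^ (2 * k * k + k) ∣ (aeval ![F.1, F.2] L) ^ k * aeval ![F.1, F.2] Pc := by
    intro Pc hPc
    have e1 : L ^ ((k + 1) * k) ∣ (aeval ![F.1, F.2] L) ^ k := by
      rw [pow_mul]
      exact pow_dvd_pow_of_dvd hdvdL k
    have e2 : L ^ (k * k) ∣ aeval ![F.1, F.2] Pc := pow_dvd_aeval hPc h1 h2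
    have := mul_dvd_mul e1 e2
    rwa [← pow_add, show (k + 1) * k + k * k = 2 * k * k + k by ring] at this
  constructor
  · have : (comp F F).1 = (aeval ![F.1, F.2] L) ^ k * aeval ![F.1, F.2] A := by
      show aeval ![F.1, F.2] F.1 = _
      rw [hA, map_mul, map_pow]
    rw [this]; exact main A hAh
  · have : (comp F F).2 = (aeval ![F.1, F.2] L) ^ k * aeval ![F.1, F.2] B := by
      show aeval ![F.1, F.2] F.2 = _
      rw [hB, map_mul, map_pow]
    rw [this]; exact main B hBh

def toUni (P : MvPoly2) : Polynomial ℂ := aeval ![Polynomial.X, 1] P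

lemma toUni_ne_zero {P : MvPoly2} {m : ℕ} (hP : P.IsHomogeneous m) (hP0 : P ≠ 0) :
    toUni P ≠ 0 := by
  obtain ⟨d, hd⟩ := exists_coeff_ne_zero hP0
  have key : (toUni P).coeff (d 0) = coeff d P := by
    rw [toUni, aeval_def, eval₂_eq, Polynomial.finset_sum_coeff]
    rw [Finset.sum_eq_single d]
    · rw [prod_support_two]
      simp [Polynomial.coeff_C_mul, Polynomial.coeff_X_pow]
    · intro b hb hbd
      rw [prod_support_two]
      have hb0 : b 0 ≠ d 0 := by
        intro heq
        apply hbd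
        have hbs := degree_sum hP (Finsupp.mem_support_iff.mp hb)
        have hds := degree_sum hP hd
        ext i
        fin_cases i
        · exact heq
        · simpa using (by omega : b 1 = d 1)
      simp [Polynomial.coeff_C_mul, Polynomial.coeff_X_pow, if_neg (Ne.symm hb0)]
    · intro hdd
      exact absurd (Finsupp.mem_support_iff.mpr hd) hdd
  intro h0
  rw [h0] at key
  simp at key
  exact hd key.symm

lemma exists_root_rep {P : MvPoly2} {m : ℕ} (hP : P.IsHomogeneous m) (hP0 : P ≠ 0)
    {g1 g2 : MvPoly2} (hg2 : g2 ≠ 0) (hz : aeval ![g1, g2] P = 0) :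
    ∃ r : ℂ, g1 = C r * g2 ∧ (aeval ![r, 1] P : ℂ) = 0 := by
  classical
  set K := FractionRing MvPoly2
  set ι : MvPoly2 →ₐ[ℂ] K := IsScalarTower.toAlgHom ℂ MvPoly2 K
  have hινz : ∀ p : MvPoly2, ι p = 0 ↔ p = 0 := by
    intro p
    constructor
    · intro h
      apply IsFractionRing.injective MvPoly2 K
      rw [map_zero]
      exact h
    · intro h; rw [h]; exact map_zero ι
  have hz' : aeval ![ι g1, ι g2] P = 0 := by
    have := hom_aeval_pair ι g1 g2 P
    rw [hz, map_zero] at this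
    exact this.symm
  have hu2 : ι g2 ≠ 0 := fun h => hg2 ((hινz g2).mp h)
  set t : K := ι g1 / ι g2
  have hvec : (![ι g1, ι g2] : Fin 2 → K) = fun i => ι g2 * (![t, 1] i) := by
    funext i; fin_cases i
    · simp [t]
      rw [mul_div_assoc', mul_div_cancel_left₀ _ hu2]
    · simp
  have hscale : aeval ![ι g1, ι g2] P = (ι g2) ^ m * aeval ![t, 1] P := by
    rw [hvec, aeval_scale hP]
  have ht0 : aeval ![t, 1] P = 0 := by
    have := hz'
    rw [hscale] at this
    rcases mul_eq_zero.mp this with h | h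
    · exact absurd h (pow_ne_zero _ hu2)
    · exact h
  set q := toUni P
  have hq0 : q ≠ 0 := toUni_ne_zero hP hP0
  have htq : Polynomial.aeval t q = aeval ![t, 1] P := by
    have := hom_aeval_pair (Polynomial.aeval t : Polynomial ℂ →ₐ[ℂ] K) Polynomial.X 1 P
    simpa [q, toUni] using this
  have hsplit : q = Polynomial.C q.leadingCoeff *
      (q.roots.map fun a => Polynomial.X - Polynomial.C a).prod :=
    (IsAlgClosed.splits q).eq_prod_roots
  have heval : (0 : K) = algebraMap ℂ K q.leadingCoeff *
      ((q.roots.map fun a => Polynomial.X - Polynomial.C a).map (Polynomial.aeval t)).prod := by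
    have h := congrArg (Polynomial.aeval t) hsplit
    rw [htq, ht0] at h
    rw [map_mul, map_multiset_prod, Polynomial.aeval_C] at h
    exact h
  have hlc : algebraMap ℂ K q.leadingCoeff ≠ 0 := by
    intro h
    exact (Polynomial.leadingCoeff_ne_zero.mpr hq0)
      ((algebraMap ℂ K).injective (by rw [map_zero]; exact h))
  have hprod : ((q.roots.map fun a => Polynomial.X - Polynomial.C a).map
      (Polynomial.aeval t)).prod = 0 := by
    rcases mul_eq_zero.mp heval.symm with h | h
    · exact absurd h hlc
    · exact h
  have hzero : (0 : K) ∈ (q.roots.map fun a => Polynomial.X - Polynomial.C a).map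
      (Polynomial.aeval t) := Multiset.prod_eq_zero_iff.mp hprod
  obtain ⟨p', hp', hp0⟩ := Multiset.mem_map.mp hzero
  obtain ⟨r, hr, hrp⟩ := Multiset.mem_map.mp hp'
  have htr : t = algebraMap ℂ K r := by
    rw [← hrp] at hp0
    rw [map_sub, Polynomial.aeval_X, Polynomial.aeval_C] at hp0
    exact sub_eq_zero.mp hp0
  refine ⟨r, ?_, ?_⟩
  · apply IsFractionRing.injective MvPoly2 K
    have e1 : algebraMap MvPoly2 K g1 = ι g1 := rfl
    have e2 : algebraMap MvPoly2 K (C r * g2) = ι (C r * g2) := rfl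
    rw [e1, e2, map_mul]
    have : ι (C r) = algebraMap ℂ K r := by
      rw [IsScalarTower.algebraMap_apply ℂ MvPoly2 K r]
      rw [algebraMap_eq]
      rfl
    rw [this, ← htr]
    show ι g1 = ι g1 / ι g2 * ι g2
    rw [div_mul_cancel₀ _ hu2]
  · have hroot : q.eval r = 0 := Polynomial.isRoot_of_mem_roots hr
    have := hom_aeval_pair (Polynomial.aeval r : Polynomial ℂ →ₐ[ℂ] ℂ) Polynomial.X 1 P
    have h2 : Polynomial.aeval r q = aeval ![r, 1] P := by
      simpa [q, toUni] using this
    rw [← h2, Polynomial.aeval_def, ← Polynomial.eval_map]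
    simpa using hroot

lemma const_of_aeval_zero {P : MvPoly2} {m : ℕ} (hP : P.IsHomogeneous m) (hP0 : P ≠ 0)
    {g : Pair} (hg : g ≠ 0) (hz : aeval ![g.1, g.2] P = 0) :
    ∃ v : ℂ × ℂ, v ≠ 0 ∧ (∃ h : MvPoly2, g.1 = C v.1 * h ∧ g.2 = C v.2 * h) ∧
      (aeval ![v.1, v.2] P : ℂ) = 0 := by
  by_cases hg2 : g.2 = 0
  · have hg1 : g.1 ≠ 0 := by
      intro h; exact hg (Prod.ext h hg2)
    have hvec : (![g.1, g.2] : Fin 2 → MvPoly2) = fun i => g.1 * (![1, 0] i) := by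
      funext i; fin_cases i <;> simp [hg2]
    have hscale : aeval ![g.1, g.2] P = g.1 ^ m * aeval ![(1 : MvPoly2), 0] P := by
      rw [hvec, aeval_scale hP]
    have h10 : aeval ![(1 : MvPoly2), 0] P = 0 := by
      rw [hscale] at hz
      rcases mul_eq_zero.mp hz with h | h
      · exact absurd h (pow_ne_zero _ hg1)
      · exact h
    have hCview : (![(1 : MvPoly2), 0] : Fin 2 → MvPoly2) = ![C 1, C 0] := by
      funext i; fin_cases i <;> simp
    rw [hCview, aeval_C_pair] at h10
    have hev : (aeval ![(1 : ℂ), 0] P : ℂ) = 0 := by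
      have := (C_eq_zero (σ := Fin 2)).mp h10
      exact this
    exact ⟨(1, 0), by simp, ⟨g.1, by simp, by simp [hg2]⟩, hev⟩
  · obtain ⟨r, hrep, hev⟩ := exists_root_rep hP hP0 hg2 hz
    exact ⟨(r, 1), by simp, ⟨g.2, hrep, by simp⟩, hev⟩

lemma const_rep_cross {g : Pair} (hg : g ≠ 0) {v w : ℂ × ℂ} {h h' : MvPoly2}
    (hv1 : g.1 = C v.1 * h) (hv2 : g.2 = C v.2 * h)
    (hw1 : g.1 = C w.1 * h') (hw2 : g.2 = C w.2 * h') :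
    v.1 * w.2 = v.2 * w.1 := by
  have cv : C v.1 * g.2 = C v.2 * g.1 := by rw [hv1, hv2]; ring
  have cw : C w.1 * g.2 = C w.2 * g.1 := by rw [hw1, hw2]; ring
  by_cases hg1 : g.1 = 0
  · have hg2 : g.2 ≠ 0 := by intro hx; exact hg (Prod.ext hg1 hx)
    have hv0 : v.1 = 0 := by
      have : C v.1 * g.2 = 0 := by rw [cv, hg1, mul_zero]
      rcases mul_eq_zero.mp this with hx | hx
      · exact (C_eq_zero).mp hx
      · exact absurd hx hg2
    have hw0 : w.1 = 0 := by
      have : C w.1 * g.2 = 0 := by rw [cw, hg1, mul_zero]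
      rcases mul_eq_zero.mp this with hx | hx
      · exact (C_eq_zero).mp hx
      · exact absurd hx hg2
    rw [hv0, hw0]; ring
  · have key : (C (v.1 * w.2) : MvPoly2) * g.1 = C (v.2 * w.1) * g.1 := by
      have e1 : (C (v.1 * w.2) : MvPoly2) * g.1 = C v.1 * (C w.2 * g.1) := by
        rw [map_mul]; ring
      rw [e1, ← cw]
      calc C v.1 * (C w.1 * g.2) = C w.1 * (C v.1 * g.2) := by ring
        _ = C w.1 * (C v.2 * g.1) := by rw [cv]
        _ = C (v.2 * w.1) * g.1 := by rw [map_mul]; ring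
    have := mul_right_cancel₀ hg1 key
    exact (C_injective _ _) this

lemma cross_zero_prop {v w : ℂ × ℂ} (hv : v ≠ 0) (hw : w ≠ 0)
    (hc : v.1 * w.2 = v.2 * w.1) : ∃ c : ℂ, c ≠ 0 ∧ v = c • w := by
  by_cases hw1 : w.1 = 0
  · have hw2 : w.2 ≠ 0 := by intro hx; exact hw (Prod.ext hw1 hx)
    have hv1 : v.1 = 0 := by
      have : v.1 * w.2 = 0 := by rw [hc, hw1]; ring
      rcases mul_eq_zero.mp this with hx | hx
      · exact hx
      · exact absurd hx hw2
    have hv2 : v.2 ≠ 0 := by intro hx; exact hv (Prod.ext hv1 hx)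
    refine ⟨v.2 / w.2, div_ne_zero hv2 hw2, ?_⟩
    apply Prod.ext
    · simp [hv1, hw1]
    · simp
      field_simp
  · have hv1 : v.1 ≠ 0 := by
      intro hx
      have : v.2 * w.1 = 0 := by rw [← hc, hx]; ring
      rcases mul_eq_zero.mp this with hy | hy
      · exact hv (Prod.ext hx hy)
      · exact hw1 hy
    refine ⟨v.1 / w.1, div_ne_zero hv1 hw1, ?_⟩
    apply Prod.ext
    · simp
      field_simp
    · simp
      field_simp
      linear_combination -hc

def evalPair (f : Pair) (x : ℂ × ℂ) : ℂ × ℂ :=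
  (aeval ![x.1, x.2] f.1, aeval ![x.1, x.2] f.2)

def orb (f : Pair) : ℕ → (ℂ × ℂ) → ℂ × ℂ
  | 0, x => x
  | k + 1, x => orb f k (evalPair f x)

lemma evalPair_scale {d : ℕ} {f : Pair} (hf1 : f.1.IsHomogeneous d)
    (hf2 : f.2.IsHomogeneous d) (c : ℂ) (x : ℂ × ℂ) :
    evalPair f (c • x) = c ^ d • evalPair f x := by
  have hvec : (![(c • x).1, (c • x).2] : Fin 2 → ℂ) = fun i => c * (![x.1, x.2] i) := by
    funext i; fin_cases i <;> simp
  unfold evalPair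
  rw [hvec, aeval_scale hf1, aeval_scale hf2]
  rfl

lemma orb_scale {d : ℕ} {f : Pair} (hf1 : f.1.IsHomogeneous d)
    (hf2 : f.2.IsHomogeneous d) (k : ℕ) (c : ℂ) (x : ℂ × ℂ) :
    orb f k (c • x) = c ^ (d ^ k) • orb f k x := by
  induction k generalizing c x with
  | zero => simp [orb]
  | succ k ih =>
      show orb f k (evalPair f (c • x)) = _
      rw [evalPair_scale hf1 hf2, ih]
      show _ = c ^ d ^ (k + 1) • orb f k (evalPair f x)
      rw [← pow_mul, ← pow_succ']

lemma comp_const {d : ℕ} {f : Pair} (hf1 : f.1.IsHomogeneous d)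
    (hf2 : f.2.IsHomogeneous d) (v : ℂ × ℂ) (h : MvPoly2) :
    comp f (C v.1 * h, C v.2 * h) =
      (h ^ d * C (aeval ![v.1, v.2] f.1), h ^ d * C (aeval ![v.1, v.2] f.2)) := by
  have hvec : (![(C v.1 * h : MvPoly2), C v.2 * h] : Fin 2 → MvPoly2)
      = fun i => h * (![C v.1, C v.2] i) := by
    funext i; fin_cases i <;> simp [mul_comm]
  unfold comp
  simp only
  rw [hvec, aeval_scale hf1, aeval_scale hf2, aeval_C_pair, aeval_C_pair]

lemma comp_zero_analysis {d : ℕ} {f : Pair} (hf1 : f.1.IsHomogeneous d)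
    (hf2 : f.2.IsHomogeneous d) (hf : f ≠ 0) {g : Pair} (hg : g ≠ 0)
    (hz : comp f g = 0) :
    ∃ v : ℂ × ℂ, v ≠ 0 ∧ (∃ h, g.1 = C v.1 * h ∧ g.2 = C v.2 * h) ∧
      evalPair f v = 0 := by
  have hz1 : aeval ![g.1, g.2] f.1 = 0 := by
    have := congrArg Prod.fst hz; simpa [comp] using this
  have hz2 : aeval ![g.1, g.2] f.2 = 0 := by
    have := congrArg Prod.snd hz; simpa [comp] using this
  by_cases hf10 : f.1 = 0
  · have hf20 : f.2 ≠ 0 := fun h => hf (Prod.ext hf10 h)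
    obtain ⟨v, hv, hrep, hev⟩ := const_of_aeval_zero hf2 hf20 hg hz2
    exact ⟨v, hv, hrep, Prod.ext (by simp [evalPair, hf10]) (by simpa [evalPair] using hev)⟩
  · obtain ⟨v, hv, hrep, hev⟩ := const_of_aeval_zero hf1 hf10 hg hz1
    by_cases hf20 : f.2 = 0
    · exact ⟨v, hv, hrep, Prod.ext (by simpa [evalPair] using hev) (by simp [evalPair, hf20])⟩
    · obtain ⟨w, hw, hrepw, hevw⟩ := const_of_aeval_zero hf2 hf20 hg hz2
      obtain ⟨h, h1, h2⟩ := hrep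
      obtain ⟨h', h1', h2'⟩ := hrepw
      have hcross := const_rep_cross hg h1 h2 h1' h2'
      obtain ⟨c, hc, hvw⟩ := cross_zero_prop hv hw hcross
      have hval2 : (aeval ![v.1, v.2] f.2 : ℂ) = c ^ d * aeval ![w.1, w.2] f.2 := by
        rw [hvw]
        have hvec : (![(c • w).1, (c • w).2] : Fin 2 → ℂ)
            = fun i => c * (![w.1, w.2] i) := by
          funext i; fin_cases i <;> simp
        rw [hvec, aeval_scale hf2]
      refine ⟨v, hv, ⟨h, h1, h2⟩, Prod.ext (by simpa [evalPair] using hev) ?_⟩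
      show (aeval ![v.1, v.2] f.2 : ℂ) = 0
      rw [hval2, hevw, mul_zero]

lemma const_pair_of_cross {v : ℂ × ℂ} (hv : v ≠ 0) {p q : MvPoly2}
    (hc : C v.2 * p = C v.1 * q) :
    ∃ h0 : MvPoly2, p = C v.1 * h0 ∧ q = C v.2 * h0 := by
  by_cases hv1 : v.1 = 0
  · have hv2 : v.2 ≠ 0 := fun hx => hv (Prod.ext hv1 hx)
    have hC2 : (C v.2 : MvPoly2) ≠ 0 := fun hx => hv2 (C_eq_zero.mp hx)
    refine ⟨C v.2⁻¹ * q, ?_, ?_⟩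
    · have hp0 : C v.2 * p = 0 := by rw [hc, hv1]; simp
      have : p = 0 := by
        rcases mul_eq_zero.mp hp0 with hx | hx
        · exact absurd hx hC2
        · exact hx
      rw [this, hv1]; simp
    · rw [← mul_assoc, ← map_mul, mul_inv_cancel₀ hv2, map_one, one_mul]
  · have hC1 : (C v.1 : MvPoly2) ≠ 0 := fun hx => hv1 (C_eq_zero.mp hx)
    refine ⟨C v.1⁻¹ * p, ?_, ?_⟩
    · rw [← mul_assoc, ← map_mul, mul_inv_cancel₀ hv1, map_one, one_mul]
    · apply mul_left_cancel₀ hC1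
      calc C v.1 * q = C v.2 * p := hc.symm
        _ = C v.2 * p * (C v.1 * C v.1⁻¹) := by
            rw [← map_mul, mul_inv_cancel₀ hv1, map_one, mul_one]
        _ = C v.1 * (C v.2 * (C v.1⁻¹ * p)) := by ring

lemma iter_good {d : ℕ} {f : Pair} (hf1 : f.1.IsHomogeneous d) (hf2 : f.2.IsHomogeneous d)
    (hf : f ≠ 0) (hI : comp f f ≠ 0) : ∀ n : ℕ, iter f n ≠ 0 ∧
      ∀ v : ℂ × ℂ, v ≠ 0 →
        (∃ h, (iter f n).1 = C v.1 * h ∧ (iter f n).2 = C v.2 * h) →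
        ∀ k, orb f k v ≠ 0 := by
  intro n
  induction n with
  | zero =>
      constructor
      · intro h0
        have hX : (X 0 : MvPoly2) = 0 := by
          have := congrArg Prod.fst h0
          simpa [iter, idPair] using this
        exact X_ne_zero 0 hX
      · intro v hv hrep k
        exfalso
        obtain ⟨h, h1, h2⟩ := hrep
        have h1' : (X 0 : MvPoly2) = C v.1 * h := by simpa [iter, idPair] using h1
        have h2' : (X 1 : MvPoly2) = C v.2 * h := by simpa [iter, idPair] using h2
        have hcross : (C v.1 : MvPoly2) * X 1 = C v.2 * X 0 := by
          rw [h1', h2']; ring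
        have e1 := congrArg (aeval ![(0 : ℂ), 1] : MvPoly2 →ₐ[ℂ] ℂ) hcross
        have e2 := congrArg (aeval ![(1 : ℂ), 0] : MvPoly2 →ₐ[ℂ] ℂ) hcross
        simp at e1 e2
        apply hv
        have hv1 : v.1 = 0 := by
          first | exact e1 | exact e1.symm | simpa using e1 | simpa using e1.symm
        have hv2 : v.2 = 0 := by
          first | exact e2 | exact e2.symm | simpa using e2 | simpa using e2.symm
        exact Prod.ext hv1 hv2
  | succ n ih =>
      have hiterne : iter f (n + 1) ≠ 0 := by
        intro h0
        have hcompz : comp f (iter f n) = 0 := h0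
        obtain ⟨v, hv, hrep, hev⟩ := comp_zero_analysis hf1 hf2 hf ih.1 hcompz
        apply ih.2 v hv hrep 1
        show orb f 0 (evalPair f v) = 0
        rw [hev]; rfl
      refine ⟨hiterne, ?_⟩
      intro v hv hrep k
      obtain ⟨h, h1, h2⟩ := hrep
      by_cases hR : (C v.2 * f.1 - C v.1 * f.2 : MvPoly2) = 0
      · -- f itself is a constant pair at v
        obtain ⟨h0, hf1c, hf2c⟩ := const_pair_of_cross hv (sub_eq_zero.mp hR)
        have hval : (aeval ![v.1, v.2] h0 : ℂ) ≠ 0 := by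
          intro hx
          apply hI
          have hfpair : f = (C v.1 * h0, C v.2 * h0) := Prod.ext hf1c hf2c
          have hcomp := comp_const hf1 hf2 v h0
          rw [← hfpair] at hcomp
          rw [hcomp]
          have e1 : (aeval ![v.1, v.2] f.1 : ℂ) = 0 := by
            rw [hf1c, map_mul, hx, mul_zero]
          have e2 : (aeval ![v.1, v.2] f.2 : ℂ) = 0 := by
            rw [hf2c, map_mul, hx, mul_zero]
          rw [e1, e2]
          simp [Prod.ext_iff]
        have hev : evalPair f v = (aeval ![v.1, v.2] h0 : ℂ) • v := by
          unfold evalPair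
          rw [hf1c, hf2c]
          apply Prod.ext <;> simp [mul_comm]
        induction k with
        | zero => exact hv
        | succ k ihk =>
            show orb f k (evalPair f v) ≠ 0
            rw [hev, orb_scale hf1 hf2]
            exact smul_ne_zero (pow_ne_zero _ hval) ihk

      · have hRhom : (C v.2 * f.1 - C v.1 * f.2 : MvPoly2).IsHomogeneous d :=
          (hf1.C_mul v.2).sub (hf2.C_mul v.1)
        have h1' : aeval ![(iter f n).1, (iter f n).2] f.1 = C v.1 * h := h1
        have h2' : aeval ![(iter f n).1, (iter f n).2] f.2 = C v.2 * h := h2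
        have hzR : aeval ![(iter f n).1, (iter f n).2] (C v.2 * f.1 - C v.1 * f.2) = 0 := by
          rw [map_sub, map_mul, map_mul, aeval_C, aeval_C, algebraMap_eq, h1', h2']
          ring
        obtain ⟨u, hu, hrepu, hevu⟩ := const_of_aeval_zero hRhom hR ih.1 hzR
        have horb := ih.2 u hu hrepu
        have hw : evalPair f u ≠ 0 := horb 1
        have hcross : v.1 * (evalPair f u).2 = v.2 * (evalPair f u).1 := by
          have : v.2 * (aeval ![u.1, u.2] f.1 : ℂ) - v.1 * aeval ![u.1, u.2] f.2 = 0 := by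
            simpa [map_sub, map_mul, aeval_C] using hevu
          show v.1 * (aeval ![u.1, u.2] f.2 : ℂ) = v.2 * aeval ![u.1, u.2] f.1
          linear_combination -this
        obtain ⟨c, hc, hvw⟩ := cross_zero_prop hv hw hcross
        rw [hvw, orb_scale hf1 hf2]
        apply smul_ne_zero (pow_ne_zero _ hc)
        exact horb (k + 1)

end Aux

/-- For `d` even and a degree-`d` pair `f ∉ I(d)`, all iterates `f^n` are nonzero, and
every iterate `f^n` is stable iff every hole of every `f^n` has depth at most `d^n/2`. -/
theorem even_degree_all_iterates_stable_iff (d : ℕ) (hd : 2 ≤ d) (hdeven : Even d)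
    (f : Pair) (hf : IsDegPair d f) (hI : ¬ IsIndet f) :
    (∀ n : ℕ, 1 ≤ n → iter f n ≠ 0) ∧
    ((∀ n : ℕ, 1 ≤ n → Stable (d ^ n) (iter f n)) ↔
      ∀ n : ℕ, 1 ≤ n → ∀ v : ℂ × ℂ, v ≠ 0 → 2 * depth v (iter f n) ≤ d ^ n) := by
  obtain ⟨hf1, hf2, hf0⟩ := hf
  have hI' : comp f f ≠ 0 := hI
  have good := Aux.iter_good hf1 hf2 hf0 hI'
  have hne : ∀ n, iter f n ≠ 0 := fun n => (good n).1
  have hhom := Aux.iter_homog hf1 hf2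
  have heven : ∀ n : ℕ, 1 ≤ n → d ^ n % 2 = 0 := by
    intro n hn
    obtain ⟨r, hr⟩ := (Nat.even_pow.mpr ⟨hdeven, by omega⟩ : Even (d ^ n))
    omega
  refine ⟨fun n _ => hne n, ?_, ?_⟩
  · -- stable → bound
    intro hst n hn v hv
    have hst' := hst n hn
    rw [Stable, if_pos (heven n hn)] at hst'
    have hle := (hst'.2 v hv).1
    have := heven n hn
    omega
  · -- bound → stable
    intro hb n hn
    rw [Stable, if_pos (heven n hn)]
    refine ⟨hne n, fun v hv => ?_⟩
    have hble := hb n hn v hv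
    have hev := heven n hn
    refine ⟨by omega, ?_⟩
    intro hpos heq hfix
    set k := depth v (iter f n) with hkdef
    have hdk : d ^ n = 2 * k := by omega
    have hspec := Aux.depth_spec hv (hne n)
    have hfixdvd := Aux.fixedHole_dvd hfix
    have hh1 : (iter f n).1.IsHomogeneous (2 * k) := by rw [← hdk]; exact (hhom n).1
    have hh2 : (iter f n).2.IsHomogeneous (2 * k) := by rw [← hdk]; exact (hhom n).2
    have hcomp := Aux.depth_comp_self hv hh1 hh2 (hne n) hspec.1 hspec.2 hfixdvd
    have h2n : iter f (n + n) = comp (iter f n) (iter f n) := Aux.iter_add f n n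
    have hdepth_ge : 2 * k * k + k ≤ depth v (iter f (n + n)) := by
      apply Aux.le_depth hv (hne (n + n))
      · rw [h2n]; exact hcomp.1
      · rw [h2n]; exact hcomp.2
    have hb2 := hb (n + n) (by omega) v hv
    have hpow : d ^ (n + n) = 4 * (k * k) := by rw [pow_add, hdk]; ring
    have hkk : 2 * k * k = 2 * (k * k) := by ring
    rw [hkk] at hdepth_ge
    omega
end
end

section
/- Let d ≥ 3 be odd and let f be a degree-d pair with f ∉ I(d); then f^n is a nonzero pair for every n ≥ 1. Moreover: (i) f^n is semistable for every n ≥ 1 if and only if d_h(f^n) ≤ (d^n − 1)/2 for every n ≥ 1 and every h ∈ ℙ¹(ℂ); (ii) if for every h ∈ ℙ¹(ℂ) one has sup_{n≥1} d_h(f^n)/d^n < 1/2, then f^n is stable for every n ≥ 1. -/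
noncomputable section

open MvPolynomial

lemma pairFun_eq (a b : MvPoly2) : (![a, b] : Fin 2 → MvPoly2) 0 = a ∧ (![a,b]) 1 = b := by
  simp

lemma comp_assoc (f g h : Pair) : comp (comp f g) h = comp f (comp g h) := by
  have key : ∀ F : MvPoly2,
      aeval ![h.1, h.2] (aeval ![g.1, g.2] F) = aeval ![(comp g h).1, (comp g h).2] F := by
    intro F
    have := congrFun (congrArg (fun φ => φ.toFun)
      (MvPolynomial.comp_aeval (φ := aeval ![h.1, h.2]) (f := ![g.1, g.2]))) F
    simp only [AlgHom.toFun_eq_coe, AlgHom.coe_comp, Function.comp_apply] at this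
    rw [this]
    have harg : (fun i => (aeval ![h.1, h.2]) ((![g.1, g.2] : Fin 2 → MvPoly2) i))
        = ![(comp g h).1, (comp g h).2] := by
      funext i; fin_cases i <;> simp [comp]
    rw [harg]
  show (_, _) = (_, _)
  simp only [comp] at *
  exact Prod.ext (key f.1) (key f.2)

lemma comp_idPair (f : Pair) : comp f idPair = f := by
  have key : ∀ F : MvPoly2, aeval ![(X 0 : MvPoly2), X 1] F = F := by
    intro F
    have : (![(X 0 : MvPoly2), X 1] : Fin 2 → MvPoly2) = fun i => X i := by
      funext i; fin_cases i <;> simp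
    rw [this]
    exact aeval_X_left_apply F
  show (_, _) = (_, _)
  simp only [comp, idPair]
  exact Prod.ext (key f.1) (key f.2)

lemma idPair_comp (f : Pair) : comp idPair f = f := by
  show (_, _) = (_, _)
  simp only [comp, idPair]
  exact Prod.ext (by simp) (by simp)

lemma iter_add (f : Pair) (a b : ℕ) : iter f (a + b) = comp (iter f a) (iter f b) := by
  induction a with
  | zero => simp [iter, idPair_comp]
  | succ a ih =>
      have : a + 1 + b = (a + b) + 1 := by omega
      rw [this]
      show comp f (iter f (a + b)) = _
      rw [ih]
      rw [← comp_assoc]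
      rfl

lemma iter_iter (f : Pair) (n j : ℕ) : iter (iter f n) j = iter f (n * j) := by
  induction j with
  | zero => simp [iter]
  | succ j ih =>
      show comp (iter f n) (iter (iter f n) j) = _
      rw [ih, ← iter_add]
      congr 1
      ring

lemma linForm_ne_zero {v : ℂ × ℂ} (hv : v ≠ 0) : linForm v ≠ 0 := by
  intro h
  apply hv
  have h1 := congrArg (coeff (Finsupp.single (0 : Fin 2) 1)) h
  have h2 := congrArg (coeff (Finsupp.single (1 : Fin 2) 1)) h
  simp [linForm, coeff_X', Finsupp.single_eq_single_iff] at h1 h2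
  exact Prod.ext h2 h1

lemma eval_linForm (v w : ℂ × ℂ) :
    eval ![w.1, w.2] (linForm v) = v.2 * w.1 - v.1 * w.2 := by
  simp [linForm]

lemma aeval_linForm (v : ℂ × ℂ) (a b : MvPoly2) :
    aeval ![a, b] (linForm v) = C v.2 * a - C v.1 * b := by
  simp [linForm, algebraMap_eq]

lemma prime_X0 : Prime (X 0 : MvPoly2) := by
  rw [← MulEquiv.prime_iff (MvPolynomial.finSuccEquiv ℂ 1).toRingEquiv.toMulEquiv]
  show Prime ((MvPolynomial.finSuccEquiv ℂ 1) (X 0))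
  rw [MvPolynomial.finSuccEquiv_X_zero]
  exact Polynomial.prime_X

lemma prime_linForm {v : ℂ × ℂ} (hv : v ≠ 0) : Prime (linForm v) := by
  obtain ⟨γ, δ, hunit⟩ : ∃ γ δ : ℂ, v.2 * δ + v.1 * γ = 1 := by
    by_cases h2 : v.2 = 0
    · have h1 : v.1 ≠ 0 := fun h1 => hv (Prod.ext h1 h2)
      exact ⟨v.1⁻¹, 0, by field_simp; simp⟩
    · exact ⟨0, v.2⁻¹, by field_simp; simp⟩
  set σh : MvPoly2 →ₐ[ℂ] MvPoly2 :=
    aeval ![C v.2 * X 0 - C v.1 * X 1, C γ * X 0 + C δ * X 1] with hσ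
  set τh : MvPoly2 →ₐ[ℂ] MvPoly2 :=
    aeval ![C δ * X 0 + C v.1 * X 1, -(C γ) * X 0 + C v.2 * X 1] with hτ
  have σX0 : σh (X 0) = C v.2 * X 0 - C v.1 * X 1 := by simp [hσ]
  have σX1 : σh (X 1) = C γ * X 0 + C δ * X 1 := by simp [hσ]
  have τX0 : τh (X 0) = C δ * X 0 + C v.1 * X 1 := by simp [hτ]
  have τX1 : τh (X 1) = -(C γ) * X 0 + C v.2 * X 1 := by simp [hτ]
  have key1 : σh (C δ * X 0 + C v.1 * X 1) = X 0 := by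
    rw [map_add, map_mul, map_mul, aeval_C, aeval_C, algebraMap_eq, σX0, σX1]
    have : C δ * (C v.2 * X 0 - C v.1 * X 1) + C v.1 * (C γ * X 0 + C δ * X 1)
        = C (v.2 * δ + v.1 * γ) * (X 0 : MvPoly2) := by
      rw [C_add, C_mul, C_mul]; ring
    rw [this, hunit, C_1, one_mul]
  have key2 : σh (-(C γ) * X 0 + C v.2 * X 1) = X 1 := by
    rw [map_add, map_mul, map_mul, map_neg, aeval_C, aeval_C, algebraMap_eq, σX0, σX1]
    have : -C γ * (C v.2 * X 0 - C v.1 * X 1) + C v.2 * (C γ * X 0 + C δ * X 1)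
        = C (v.2 * δ + v.1 * γ) * (X 1 : MvPoly2) := by
      rw [C_add, C_mul, C_mul]; ring
    rw [this, hunit, C_1, one_mul]
  have key3 : τh (C v.2 * X 0 - C v.1 * X 1) = X 0 := by
    rw [map_sub, map_mul, map_mul, aeval_C, aeval_C, algebraMap_eq, τX0, τX1]
    have : C v.2 * (C δ * X 0 + C v.1 * X 1) - C v.1 * (-C γ * X 0 + C v.2 * X 1)
        = C (v.2 * δ + v.1 * γ) * (X 0 : MvPoly2) := by
      rw [C_add, C_mul, C_mul]; ring
    rw [this, hunit, C_1, one_mul]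
  have key4 : τh (C γ * X 0 + C δ * X 1) = X 1 := by
    rw [map_add, map_mul, map_mul, aeval_C, aeval_C, algebraMap_eq, τX0, τX1]
    have : C γ * (C δ * X 0 + C v.1 * X 1) + C δ * (-C γ * X 0 + C v.2 * X 1)
        = C (v.2 * δ + v.1 * γ) * (X 1 : MvPoly2) := by
      rw [C_add, C_mul, C_mul]; ring
    rw [this, hunit, C_1, one_mul]
  have hcomp1 : σh.comp τh = AlgHom.id ℂ MvPoly2 := by
    apply MvPolynomial.algHom_ext
    intro i
    fin_cases i
    · show σh (τh (X 0)) = X 0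
      rw [τX0, key1]
    · show σh (τh (X 1)) = X 1
      rw [τX1, key2]
  have hcomp2 : τh.comp σh = AlgHom.id ℂ MvPoly2 := by
    apply MvPolynomial.algHom_ext
    intro i
    fin_cases i
    · show τh (σh (X 0)) = X 0
      rw [σX0, key3]
    · show τh (σh (X 1)) = X 1
      rw [σX1, key4]
  set E : MvPoly2 ≃ₐ[ℂ] MvPoly2 := AlgEquiv.ofAlgHom σh τh hcomp1 hcomp2 with hE
  have hEX : E (X 0) = linForm v := by
    show σh (X 0) = linForm v
    rw [σX0]; rfl
  rw [← hEX]
  exact ((MulEquiv.prime_iff E.toRingEquiv.toMulEquiv).mpr prime_X0)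

lemma bddAbove_pow_dvd {L F : MvPoly2} (hL : Prime L) (hF : F ≠ 0) :
    BddAbove {n : ℕ | L ^ n ∣ F} := by
  obtain ⟨n, c, hc, rfl⟩ := WfDvdMonoid.max_power_factor hF hL.irreducible
  refine ⟨n, fun k hk => ?_⟩
  by_contra hlt
  push_neg at hlt
  apply hc
  have h1 : L ^ (n + 1) ∣ L ^ n * c := dvd_trans (pow_dvd_pow L hlt) hk
  rw [pow_succ] at h1
  exact (mul_dvd_mul_iff_left (pow_ne_zero n hL.ne_zero)).mp h1

lemma bddAbove_depthSet {v : ℂ × ℂ} (hv : v ≠ 0) {f : Pair} (hf : f ≠ 0) :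
    BddAbove {n : ℕ | linForm v ^ n ∣ f.1 ∧ linForm v ^ n ∣ f.2} := by
  have h12 : f.1 ≠ 0 ∨ f.2 ≠ 0 := by
    by_contra h
    push_neg at h
    exact hf (Prod.ext h.1 h.2)
  rcases h12 with h | h
  · exact (bddAbove_pow_dvd (prime_linForm hv) h).mono (fun n hn => hn.1)
  · exact (bddAbove_pow_dvd (prime_linForm hv) h).mono (fun n hn => hn.2)

lemma depth_spec {v : ℂ × ℂ} (hv : v ≠ 0) {f : Pair} (hf : f ≠ 0) :
    linForm v ^ depth v f ∣ f.1 ∧ linForm v ^ depth v f ∣ f.2 :=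
  Nat.sSup_mem ⟨0, by simp⟩ (bddAbove_depthSet hv hf)

lemma le_depth {v : ℂ × ℂ} (hv : v ≠ 0) {f : Pair} (hf : f ≠ 0) {k : ℕ}
    (h1 : linForm v ^ k ∣ f.1) (h2 : linForm v ^ k ∣ f.2) : k ≤ depth v f :=
  le_csSup (bddAbove_depthSet hv hf) ⟨h1, h2⟩

lemma fixedHole_dvd {v : ℂ × ℂ} {f : Pair} (h : FixedHole v f) :
    linForm v ^ (depth v f + 1) ∣ fixedForm f := by
  by_cases hdvd : linForm v ^ (depth v f + 1) ∣ fixedForm f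
  · exact hdvd
  · exfalso
    have : ord v (fixedForm f) ≤ depth v f := by
      apply csSup_le ⟨0, by simp⟩
      intro n hn
      by_contra hgt
      push_neg at hgt
      exact hdvd (dvd_trans (pow_dvd_pow _ hgt) hn)
    exact absurd h (not_lt.mpr this)

lemma degree_two_eq {F : MvPoly2} {e : ℕ} (hF : F.IsHomogeneous e)
    {u : Fin 2 →₀ ℕ} (hu : coeff u F ≠ 0) : u 0 + u 1 = e := by
  have hdeg : u.degree = e := by
    by_contra h
    exact hu (hF.coeff_eq_zero h)
  rw [← hdeg]
  rw [Finsupp.degree_apply]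
  rw [show (∑ i ∈ u.support, u i) = ∑ i : Fin 2, u i from
    Finset.sum_subset (Finset.subset_univ _) (fun i _ hi => Finsupp.notMem_support_iff.mp hi)]
  exact (Fin.sum_univ_two u).symm

lemma aeval_mul_pair {F : MvPoly2} {e : ℕ} (hF : F.IsHomogeneous e) (c a b : MvPoly2) :
    aeval ![c * a, c * b] F = c ^ e * aeval ![a, b] F := by
  conv_lhs => rw [F.as_sum]
  conv_rhs => rw [F.as_sum]
  rw [map_sum, map_sum, Finset.mul_sum]
  refine Finset.sum_congr rfl fun u hu => ?_
  rw [aeval_monomial, aeval_monomial, Finsupp.prod_pow, Finsupp.prod_pow,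
    Fin.prod_univ_two, Fin.prod_univ_two]
  simp only [Matrix.cons_val_zero, Matrix.cons_val_one, Matrix.head_cons]
  rw [← degree_two_eq hF (mem_support_iff.mp hu)]
  ring

lemma aeval_C_pair (F : MvPoly2) (a b : ℂ) :
    aeval (![C a, C b] : Fin 2 → MvPoly2) F = (C (eval ![a, b] F) : MvPoly2) := by
  induction F using MvPolynomial.induction_on with
  | C r => rw [aeval_C, algebraMap_eq, eval_C]
  | add p q hp hq => rw [map_add, map_add, hp, hq, C_add]
  | mul_X p i hp =>
      rw [map_mul, map_mul, hp, C_mul, aeval_X, eval_X]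
      congr 1
      fin_cases i <;> simp

def sfun (m : ℕ) (i : ℕ) : Fin 2 →₀ ℕ := Finsupp.single 0 i + Finsupp.single 1 (m - i)

lemma sfun_apply0 (m i : ℕ) : sfun m i 0 = i := by
  simp [sfun, Finsupp.single_apply]

lemma sfun_apply1 (m i : ℕ) : sfun m i 1 = m - i := by
  simp [sfun, Finsupp.single_apply]

lemma homog_as_sum {F : MvPoly2} {m : ℕ} (hF : F.IsHomogeneous m) :
    F = ∑ i ∈ Finset.range (m + 1), monomial (sfun m i) (coeff (sfun m i) F) := by
  have himg : F.support ⊆ (Finset.range (m + 1)).image (sfun m) := by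
    intro u hu
    have hd := degree_two_eq hF (mem_support_iff.mp hu)
    refine Finset.mem_image.mpr ⟨u 0, Finset.mem_range.mpr (by omega), ?_⟩
    ext j
    fin_cases j
    · show sfun m (u 0) 0 = u 0
      rw [sfun_apply0]
    · show sfun m (u 0) 1 = u 1
      rw [sfun_apply1]; omega
  calc F = ∑ u ∈ (Finset.range (m + 1)).image (sfun m), monomial u (coeff u F) := by
            conv_lhs => rw [F.as_sum]
            exact Finset.sum_subset himg
              (fun u _ hu => by rw [notMem_support_iff.mp hu, map_zero])
    _ = _ := Finset.sum_image (fun i _ j _ h => by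
            have := congrArg (fun u : Fin 2 →₀ ℕ => u 0) h
            simpa [sfun_apply0] using this)

def Psi : MvPoly2 →ₐ[ℂ] Polynomial ℂ := aeval ![Polynomial.X, 1]

lemma Psi_monomial (u : Fin 2 →₀ ℕ) (r : ℂ) :
    Psi (monomial u r) = Polynomial.C r * Polynomial.X ^ (u 0) := by
  rw [Psi, aeval_monomial, Finsupp.prod_pow, Fin.prod_univ_two]
  simp only [Matrix.cons_val_zero, Matrix.cons_val_one, Matrix.head_cons, one_pow, mul_one]
  rw [Polynomial.algebraMap_eq]

lemma Psi_homog {F : MvPoly2} {m : ℕ} (hF : F.IsHomogeneous m) :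
    Psi F = ∑ i ∈ Finset.range (m + 1), Polynomial.C (coeff (sfun m i) F) * Polynomial.X ^ i := by
  conv_lhs => rw [homog_as_sum hF]
  rw [map_sum]
  exact Finset.sum_congr rfl fun i _ => by rw [Psi_monomial, sfun_apply0]

lemma Psi_coeff {F : MvPoly2} {m : ℕ} (hF : F.IsHomogeneous m) {j : ℕ} (hj : j ≤ m) :
    (Psi F).coeff j = coeff (sfun m j) F := by
  rw [Psi_homog hF, Polynomial.finset_sum_coeff]
  rw [Finset.sum_eq_single j]
  · simp
  · intro i _ hij
    simp [Polynomial.coeff_C_mul, Polynomial.coeff_X_pow, Ne.symm hij]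
  · intro hj'
    exact absurd (Finset.mem_range.mpr (by omega)) hj'

lemma Psi_natDegree_le {F : MvPoly2} {m : ℕ} (hF : F.IsHomogeneous m) :
    (Psi F).natDegree ≤ m := by
  apply Polynomial.natDegree_le_iff_coeff_eq_zero.mpr
  intro N hN
  rw [Psi_homog hF, Polynomial.finset_sum_coeff]
  apply Finset.sum_eq_zero
  intro i hi
  have : i ≠ N := by have := Finset.mem_range.mp hi; omega
  simp [Polynomial.coeff_C_mul, Polynomial.coeff_X_pow, Ne.symm this]

lemma Psi_eq_zero {F : MvPoly2} {m : ℕ} (hF : F.IsHomogeneous m) (h : Psi F = 0) :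
    F = 0 := by
  rw [homog_as_sum hF]
  apply Finset.sum_eq_zero
  intro i hi
  have him : i ≤ m := Nat.lt_succ_iff.mp (Finset.mem_range.mp hi)
  have : coeff (sfun m i) F = 0 := by
    rw [← Psi_coeff hF him, h, Polynomial.coeff_zero]
  rw [this, map_zero]

lemma multiset_prod_homog (s : Multiset ℂ) :
    ((s.map fun r => (X 0 : MvPoly2) - C r * X 1).prod).IsHomogeneous (Multiset.card s) := by
  induction s using Multiset.induction_on with
  | empty => simpa using isHomogeneous_one (Fin 2) ℂ
  | cons r s ih =>
      rw [Multiset.map_cons, Multiset.prod_cons, Multiset.card_cons]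
      have h1 : ((X 0 : MvPoly2) - C r * X 1).IsHomogeneous 1 :=
        (isHomogeneous_X ℂ 0).sub ((isHomogeneous_X ℂ 1).C_mul r)
      simpa [add_comm] using h1.mul ih

lemma homog_factorization {F : MvPoly2} {m : ℕ} (hF : F.IsHomogeneous m) (hF0 : F ≠ 0) :
    F = X 1 ^ (m - (Psi F).natDegree) *
      (C (Psi F).leadingCoeff * (((Psi F).roots.map fun r => (X 0 : MvPoly2) - C r * X 1)).prod) := by
  set p := Psi F with hp
  have hp0 : p ≠ 0 := fun h => hF0 (Psi_eq_zero hF h)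
  have hs : p.natDegree ≤ m := Psi_natDegree_le hF
  have hsplit : p.Splits := IsAlgClosed.splits p
  have hcard : p.roots.card = p.natDegree := (Polynomial.splits_iff_card_roots).mp hsplit
  have hRhom : (X 1 ^ (m - p.natDegree) *
      (C p.leadingCoeff * ((p.roots.map fun r => (X 0 : MvPoly2) - C r * X 1)).prod)).IsHomogeneous m := by
    have h1 := (isHomogeneous_X ℂ (1 : Fin 2)).pow (m - p.natDegree)
    have h2 := ((multiset_prod_homog p.roots).C_mul p.leadingCoeff)
    rw [hcard] at h2
    have := h1.mul h2
    rw [one_mul] at this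
    have heq : m - p.natDegree + p.natDegree = m := by omega
    rwa [heq] at this
  have hPsiR : Psi (X 1 ^ (m - p.natDegree) *
      (C p.leadingCoeff * ((p.roots.map fun r => (X 0 : MvPoly2) - C r * X 1)).prod)) = p := by
    rw [map_mul, map_mul, map_pow]
    have hX1 : Psi (X 1 : MvPoly2) = 1 := by simp [Psi]
    have hC : ∀ r : ℂ, Psi (C r : MvPoly2) = Polynomial.C r := by
      intro r; rw [Psi, aeval_C, Polynomial.algebraMap_eq]
    have hprod : Psi ((p.roots.map fun r => (X 0 : MvPoly2) - C r * X 1)).prod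
        = ((p.roots.map fun r => Polynomial.X - Polynomial.C r)).prod := by
      rw [map_multiset_prod, Multiset.map_map]
      congr 1
      apply Multiset.map_congr rfl
      intro r _
      simp only [Function.comp_apply, map_sub, map_mul, hX1, mul_one, hC]
      rw [Psi, aeval_X]
      simp
    rw [hX1, one_pow, one_mul, hC, hprod]
    exact (hsplit.eq_prod_roots).symm
  have hdiff : (F - _).IsHomogeneous m := hF.sub hRhom
  have : F - X 1 ^ (m - p.natDegree) *
      (C p.leadingCoeff * ((p.roots.map fun r => (X 0 : MvPoly2) - C r * X 1)).prod) = 0 := by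
    apply Psi_eq_zero hdiff
    rw [map_sub, hPsiR, ← hp, sub_self]
  exact (sub_eq_zero.mp this)

lemma exists_prop_of_aeval_eq_zero {F : MvPoly2} {m : ℕ} (hF : F.IsHomogeneous m)
    (hF0 : F ≠ 0) {h1 h2 : MvPoly2} (h : aeval ![h1, h2] F = 0) :
    ∃ v : ℂ × ℂ, v ≠ 0 ∧ C v.2 * h1 = C v.1 * h2 := by
  rw [homog_factorization hF hF0] at h
  rw [map_mul, map_mul, map_pow, map_multiset_prod, Multiset.map_map] at h
  have hX1 : aeval ![h1, h2] (X 1 : MvPoly2) = h2 := by simp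
  have hC : aeval ![h1, h2] (C (Psi F).leadingCoeff : MvPoly2)
      = C (Psi F).leadingCoeff := by rw [aeval_C, algebraMap_eq]
  rw [hX1, hC] at h
  rcases mul_eq_zero.mp h with hcase | hcase
  · -- h2 ^ k = 0
    have hh2 : h2 = 0 := (pow_eq_zero_iff'.mp hcase).1
    exact ⟨(1, 0), by simp [Prod.ext_iff], by simp [hh2]⟩
  rcases mul_eq_zero.mp hcase with hcase2 | hcase2
  · exfalso
    have : (Psi F).leadingCoeff ≠ 0 :=
      Polynomial.leadingCoeff_ne_zero.mpr (fun hh => hF0 (Psi_eq_zero hF hh))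
    exact this (by simpa using hcase2)
  · have h0mem := Multiset.prod_eq_zero_iff.mp hcase2
    obtain ⟨r, _, hr⟩ := Multiset.mem_map.mp h0mem
    have : h1 - C r * h2 = 0 := by
      symm
      simpa [algebraMap_eq] using hr.symm
    exact ⟨(r, 1), by simp [Prod.ext_iff], by
      rw [C_1, one_mul]
      exact sub_eq_zero.mp this⟩

lemma idPair_ne_zero : (idPair : Pair) ≠ 0 := by
  intro h
  have := congrArg Prod.fst h
  simpa [idPair] using (X_ne_zero (R := ℂ) (0 : Fin 2)) this

lemma iter_ne_zero {d : ℕ} {f : Pair} (hf : IsDegPair d f) (hI : comp f f ≠ 0) :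
    ∀ n : ℕ, iter f n ≠ 0 := by
  obtain ⟨hf1, hf2, hfne⟩ := hf
  by_cases hprop : ∃ v : ℂ × ℂ, v ≠ 0 ∧ C v.2 * f.1 = C v.1 * f.2
  · -- Case A : the two components are proportional
    obtain ⟨v, hv0, hvp⟩ := hprop
    obtain ⟨k, hk1, hk2⟩ : ∃ k : MvPoly2, f.1 = C v.1 * k ∧ f.2 = C v.2 * k := by
      by_cases hγ : v.1 = 0
      · have hδ : v.2 ≠ 0 := fun h => hv0 (Prod.ext hγ h)
        have hf10 : f.1 = 0 := by
          have : C v.2 * f.1 = 0 := by rw [hvp, hγ]; simp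
          rcases mul_eq_zero.mp this with h | h
          · exact absurd (by simpa using h) hδ
          · exact h
        refine ⟨C v.2⁻¹ * f.2, by rw [hf10, hγ]; simp, ?_⟩
        rw [← mul_assoc, ← C_mul, mul_inv_cancel₀ hδ, C_1, one_mul]
      · refine ⟨C v.1⁻¹ * f.1, ?_, ?_⟩
        · rw [← mul_assoc, ← C_mul, mul_inv_cancel₀ hγ, C_1, one_mul]
        · have hC : (C v.1 : MvPoly2) ≠ 0 := fun h => hγ (by simpa using h)
          apply mul_left_cancel₀ hC
          have hre : C v.1 * (C v.2 * (C v.1⁻¹ * f.1))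
              = (C v.1 * C v.1⁻¹) * (C v.2 * f.1) := by ring
          rw [← hvp, hre, ← C_mul, mul_inv_cancel₀ hγ, C_1, one_mul]
    have hk0 : k ≠ 0 := by
      intro h
      apply hfne
      rw [h, mul_zero] at hk1 hk2
      exact Prod.ext hk1 hk2
    have hkh : k.IsHomogeneous d := by
      by_cases hγ : v.1 = 0
      · have hδ : v.2 ≠ 0 := fun h => hv0 (Prod.ext hγ h)
        have : k = C v.2⁻¹ * f.2 := by
          rw [hk2, ← mul_assoc, ← C_mul, inv_mul_cancel₀ hδ, C_1, one_mul]
        rw [this]; exact hf2.C_mul _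
      · have : k = C v.1⁻¹ * f.1 := by
          rw [hk1, ← mul_assoc, ← C_mul, inv_mul_cancel₀ hγ, C_1, one_mul]
        rw [this]; exact hf1.C_mul _
    have hfpair : f = (C v.1 * k, C v.2 * k) := Prod.ext hk1 hk2
    set w : ℂ := eval ![v.1, v.2] k with hw
    have hcompK : ∀ K : MvPoly2, comp f (C v.1 * K, C v.2 * K)
        = (C v.1 * (K ^ d * C w), C v.2 * (K ^ d * C w)) := by
      intro K
      have key : aeval ![C v.1 * K, C v.2 * K] k = K ^ d * C w := by
        have h1 : (![C v.1 * K, C v.2 * K] : Fin 2 → MvPoly2)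
            = ![K * C v.1, K * C v.2] := by
          funext i; fin_cases i <;> simp [mul_comm]
        rw [h1, aeval_mul_pair hkh K (C v.1) (C v.2), aeval_C_pair]
      show (aeval ![C v.1 * K, C v.2 * K] f.1, aeval ![C v.1 * K, C v.2 * K] f.2) = _
      rw [hk1, hk2, map_mul, map_mul, aeval_C, aeval_C, algebraMap_eq, key]
    have hw0 : w ≠ 0 := by
      intro h
      apply hI
      nth_rewrite 2 [hfpair]
      rw [hcompK k, h]
      simp [Prod.ext_iff]
    have hiter : ∀ n : ℕ, ∃ K : MvPoly2, K ≠ 0 ∧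
        iter f (n + 1) = (C v.1 * K, C v.2 * K) := by
      intro n
      induction n with
      | zero =>
          refine ⟨k, hk0, ?_⟩
          show comp f idPair = _
          rw [comp_idPair, hfpair]
      | succ n ih =>
          obtain ⟨K, hK0, hKe⟩ := ih
          refine ⟨K ^ d * C w, ?_, ?_⟩
          · exact mul_ne_zero (pow_ne_zero _ hK0) (fun h => hw0 (by simpa using h))
          · show comp f (iter f (n + 1)) = _
            rw [hKe, hcompK]
    intro n
    cases n with
    | zero => exact idPair_ne_zero
    | succ n =>
        obtain ⟨K, hK0, hKe⟩ := hiter n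
        rw [hKe]
        intro h
        have h1 : C v.1 * K = 0 := congrArg Prod.fst h
        have h2 : C v.2 * K = 0 := congrArg Prod.snd h
        rcases mul_eq_zero.mp h1 with hc | hc
        · rcases mul_eq_zero.mp h2 with hc2 | hc2
          · exact hv0 (Prod.ext (by simpa using hc) (by simpa using hc2))
          · exact hK0 hc2
        · exact hK0 hc
  · -- Case B : components not proportional
    have hf10 : f.1 ≠ 0 := by
      intro h
      exact hprop ⟨(0, 1), by simp [Prod.ext_iff], by simp [h]⟩
    have key : ∀ n : ℕ, iter f n ≠ 0 ∧
        ¬∃ v : ℂ × ℂ, v ≠ 0 ∧ C v.2 * (iter f n).1 = C v.1 * (iter f n).2 := by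
      intro n
      induction n with
      | zero =>
          refine ⟨idPair_ne_zero, ?_⟩
          rintro ⟨v, hv0, hvp⟩
          apply linForm_ne_zero hv0
          show C v.2 * X 0 - C v.1 * X 1 = 0
          rw [show (iter f 0).1 = X 0 from rfl, show (iter f 0).2 = X 1 from rfl] at hvp
          rw [hvp, sub_self]
      | succ n ih =>
          obtain ⟨hne, hnp⟩ := ih
          constructor
          · intro h0
            have : aeval ![(iter f n).1, (iter f n).2] f.1 = 0 := by
              have := congrArg Prod.fst h0
              exact this
            exact hnp (exists_prop_of_aeval_eq_zero hf1 hf10 this)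
          · rintro ⟨v, hv0, hvp⟩
            have hG0 : C v.2 * f.1 - C v.1 * f.2 ≠ 0 := by
              intro h
              exact hprop ⟨v, hv0, sub_eq_zero.mp h⟩
            have hGh : (C v.2 * f.1 - C v.1 * f.2).IsHomogeneous d :=
              (hf1.C_mul _).sub (hf2.C_mul _)
            have hGz : aeval ![(iter f n).1, (iter f n).2] (C v.2 * f.1 - C v.1 * f.2) = 0 := by
              rw [map_sub, map_mul, map_mul, aeval_C, aeval_C, algebraMap_eq]
              have e1 : (aeval ![(iter f n).1, (iter f n).2]) f.1 = (iter f (n+1)).1 := rfl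
              have e2 : (aeval ![(iter f n).1, (iter f n).2]) f.2 = (iter f (n+1)).2 := rfl
              rw [e1, e2, hvp, sub_self]
            exact hnp (exists_prop_of_aeval_eq_zero hGh hG0 hGz)
    exact fun n => (key n).1

lemma iter_homog {d : ℕ} {f : Pair} (hf1 : f.1.IsHomogeneous d) (hf2 : f.2.IsHomogeneous d) :
    ∀ n : ℕ, (iter f n).1.IsHomogeneous (d ^ n) ∧ (iter f n).2.IsHomogeneous (d ^ n) := by
  intro n
  induction n with
  | zero =>
      constructor
      · simpa [iter, idPair] using isHomogeneous_X ℂ (0 : Fin 2)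
      · simpa [iter, idPair] using isHomogeneous_X ℂ (1 : Fin 2)
  | succ n ih =>
      have hg : ∀ i : Fin 2, ((![(iter f n).1, (iter f n).2] : Fin 2 → MvPoly2) i).IsHomogeneous (d ^ n) := by
        intro i
        fin_cases i
        · exact ih.1
        · exact ih.2
      constructor
      · have := hf1.aeval ![(iter f n).1, (iter f n).2] hg
        rwa [show d ^ n * d = d ^ (n + 1) from (pow_succ d n).symm] at this
      · have := hf2.aeval ![(iter f n).1, (iter f n).2] hg
        rwa [show d ^ n * d = d ^ (n + 1) from (pow_succ d n).symm] at this

lemma fixed_seed {v : ℂ × ℂ} (hv : v ≠ 0) {g : Pair} (hfix : FixedHole v g) :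
    linForm v ^ (depth v g + 1) ∣ C v.2 * g.1 - C v.1 * g.2 := by
  by_cases hg : g = 0
  · rw [hg]; simp
  set L := linForm v with hL
  set m := depth v g with hm
  have hff : L ^ (m + 1) ∣ fixedForm g := fixedHole_dvd hfix
  have hd := depth_spec hv hg
  have id1 : X 0 * (C v.2 * g.1 - C v.1 * g.2) = L * g.1 - C v.1 * fixedForm g := by
    simp only [hL, linForm, fixedForm]; ring
  have id2 : X 1 * (C v.2 * g.1 - C v.1 * g.2) = L * g.2 - C v.2 * fixedForm g := by
    simp only [hL, linForm, fixedForm]; ring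
  have hdvd1 : L ^ (m + 1) ∣ X 0 * (C v.2 * g.1 - C v.1 * g.2) := by
    rw [id1]
    exact dvd_sub (by rw [pow_succ']; exact mul_dvd_mul_left L hd.1) (hff.mul_left _)
  have hdvd2 : L ^ (m + 1) ∣ X 1 * (C v.2 * g.1 - C v.1 * g.2) := by
    rw [id2]
    exact dvd_sub (by rw [pow_succ']; exact mul_dvd_mul_left L hd.2) (hff.mul_left _)
  have hnotboth : ¬ L ∣ X 0 ∨ ¬ L ∣ X 1 := by
    by_contra hcon
    push_neg at hcon
    obtain ⟨t1, ht1⟩ := hcon.1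
    obtain ⟨t2, ht2⟩ := hcon.2
    have e0 : eval ![v.1, v.2] (linForm v) = 0 := by rw [eval_linForm]; ring
    have hv1 : v.1 = 0 := by
      have := congrArg (eval ![v.1, v.2]) ht1
      rw [map_mul] at this
      rw [show eval ![v.1, v.2] L = 0 from e0, zero_mul] at this
      simpa using this
    have hv2 : v.2 = 0 := by
      have := congrArg (eval ![v.1, v.2]) ht2
      rw [map_mul] at this
      rw [show eval ![v.1, v.2] L = 0 from e0, zero_mul] at this
      simpa using this
    exact hv (Prod.ext hv1 hv2)
  rcases hnotboth with hnd | hnd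
  · exact (prime_linForm hv).pow_dvd_of_dvd_mul_left (m + 1) hnd hdvd1
  · exact (prime_linForm hv).pow_dvd_of_dvd_mul_left (m + 1) hnd hdvd2

lemma inv_step {v : ℂ × ℂ} {e m : ℕ} {g : Pair}
    (hg1 : g.1.IsHomogeneous e) (hg2 : g.2.IsHomogeneous e)
    {p q s : MvPoly2} (hp : g.1 = linForm v ^ m * p) (hq : g.2 = linForm v ^ m * q)
    (hs : C v.2 * p - C v.1 * q = linForm v * s)
    {h : Pair} {k : ℕ} {a b t : MvPoly2}
    (ha : h.1 = linForm v ^ k * a) (hb : h.2 = linForm v ^ k * b)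
    (ht : C v.2 * a - C v.1 * b = linForm v * t) :
    ∃ a' b' t', (comp g h).1 = linForm v ^ (e * k + m) * a'
      ∧ (comp g h).2 = linForm v ^ (e * k + m) * b'
      ∧ C v.2 * a' - C v.1 * b' = linForm v * t' := by
  set L := linForm v with hL
  have hLab : aeval ![a, b] L = L * t := by rw [hL, aeval_linForm, ht]
  have comp1 : ∀ (F r : MvPoly2), F.IsHomogeneous e → F = L ^ m * r →
      aeval ![h.1, h.2] F = L ^ (e * k + m) * (t ^ m * aeval ![a, b] r) := by
    intro F r hF hFr
    rw [ha, hb, aeval_mul_pair hF (L ^ k) a b, hFr, map_mul, map_pow, hLab]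
    rw [← pow_mul, mul_pow, pow_add]
    ring
  refine ⟨t ^ m * aeval ![a, b] p, t ^ m * aeval ![a, b] q,
    t ^ (m + 1) * aeval ![a, b] s, comp1 g.1 p hg1 hp, comp1 g.2 q hg2 hq, ?_⟩
  have hmain : C v.2 * (t ^ m * aeval ![a, b] p) - C v.1 * (t ^ m * aeval ![a, b] q)
      = t ^ m * aeval ![a, b] (C v.2 * p - C v.1 * q) := by
    rw [map_sub, map_mul, map_mul, aeval_C, aeval_C, algebraMap_eq]
    ring
  rw [hmain, hs, map_mul, hLab]
  ring

/-- For `d ≥ 3` odd and a degree-`d` pair `f ∉ I(d)`, all iterates `f^n` are nonzero;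
(i) every iterate `f^n` is semistable iff every hole of every `f^n` has depth at most
`(d^n - 1)/2`; (ii) if for every point the supremum of `depth/(d^n)` over all iterates
is strictly below `1/2`, then every iterate `f^n` is stable. -/
theorem odd_degree_iterates_semistable_iff (d : ℕ) (hd : 3 ≤ d) (hodd : Odd d)
    (f : Pair) (hf : IsDegPair d f) (hI : ¬ IsIndet f) :
    (∀ n : ℕ, 1 ≤ n → iter f n ≠ 0) ∧
    ((∀ n : ℕ, 1 ≤ n → Semistable (d ^ n) (iter f n)) ↔
      ∀ n : ℕ, 1 ≤ n → ∀ v : ℂ × ℂ, v ≠ 0 → 2 * depth v (iter f n) ≤ d ^ n - 1) ∧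
    ((∀ v : ℂ × ℂ, v ≠ 0 → ∃ c : ℝ, c < 1 / 2 ∧
        ∀ n : ℕ, 1 ≤ n → (depth v (iter f n) : ℝ) ≤ c * (d : ℝ) ^ n) →
      ∀ n : ℕ, 1 ≤ n → Stable (d ^ n) (iter f n)) := by
  have hI' : comp f f ≠ 0 := hI
  have hne : ∀ n, iter f n ≠ 0 := iter_ne_zero hf hI'
  obtain ⟨hf1, hf2, hfne⟩ := hf
  have hhom := iter_homog hf1 hf2
  have hoddpow : ∀ n : ℕ, d ^ n % 2 = 1 := fun n => Nat.odd_iff.mp hodd.pow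
  have hd3 : ∀ n : ℕ, 1 ≤ n → 3 ≤ d ^ n := by
    intro n hn
    calc (3:ℕ) ≤ d := hd
    _ = d ^ 1 := (pow_one d).symm
    _ ≤ d ^ n := Nat.pow_le_pow_right (by omega) hn
  refine ⟨fun n _ => hne n, ⟨?_, ?_⟩, ?_⟩
  · -- (i) forward
    intro hss n hn v hv
    by_contra hcon
    push_neg at hcon
    have hsse := hss n hn
    rw [Semistable, if_neg (by simp [hoddpow n])] at hsse
    have hub : depth v (iter f n) ≤ (d ^ n + 1) / 2 := (hsse.2 v hv).1
    obtain ⟨kk, hkk⟩ := (hodd.pow : Odd (d ^ n))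
    have h2m : 2 * depth v (iter f n) = d ^ n + 1 := by omega
    have hds := depth_spec hv (hne n)
    obtain ⟨p, hp⟩ := hds.1
    obtain ⟨q, hq⟩ := hds.2
    have h2n : iter f (2 * n) = comp (iter f n) (iter f n) := by
      rw [show 2 * n = n + n by ring, iter_add]
    set m := depth v (iter f n) with hm
    have hdvd2n : ∀ (F r : MvPoly2), F.IsHomogeneous (d ^ n) → F = linForm v ^ m * r →
        linForm v ^ (d ^ n * m) ∣ aeval ![(iter f n).1, (iter f n).2] F := by
      intro F r hF hFr
      rw [hp, hq, aeval_mul_pair hF _ p q]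
      refine Dvd.dvd.mul_right ?_ _
      rw [← pow_mul, mul_comm m (d ^ n)]
    have hle : d ^ n * m ≤ depth v (iter f (2 * n)) := by
      apply le_depth hv (hne (2 * n))
      · rw [h2n]
        exact hdvd2n (iter f n).1 p (hhom n).1 hp
      · rw [h2n]
        exact hdvd2n (iter f n).2 q (hhom n).2 hq
    have hss2 := hss (2 * n) (by omega)
    rw [Semistable, if_neg (by simp [hoddpow (2 * n)])] at hss2
    have hub2 : depth v (iter f (2 * n)) ≤ (d ^ (2 * n) + 1) / 2 := (hss2.2 v hv).1
    have he2 : d ^ (2 * n) = d ^ n * d ^ n := by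
      rw [← pow_add]; congr 1; ring
    have hfin : d ^ n * m ≤ (d ^ n * d ^ n + 1) / 2 := by
      rw [← he2]; exact le_trans hle hub2
    have h' : (d ^ n * m) * 2 ≤ d ^ n * d ^ n + 1 :=
      (Nat.le_div_iff_mul_le (by norm_num)).mp hfin
    have hexp : d ^ n * d ^ n + d ^ n ≤ d ^ n * d ^ n + 1 := by
      calc d ^ n * d ^ n + d ^ n = d ^ n * (2 * m) := by rw [h2m]; ring
      _ = (d ^ n * m) * 2 := by ring
      _ ≤ d ^ n * d ^ n + 1 := h'
    have : d ^ n ≤ 1 := by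
      have := add_le_add_iff_left (d ^ n * d ^ n) |>.mp hexp
      exact this
    have := hd3 n hn
    omega
  · -- (i) backward
    intro hb n hn
    rw [Semistable, if_neg (by simp [hoddpow n])]
    refine ⟨hne n, fun v hv => ?_⟩
    have h2m := hb n hn v hv
    obtain ⟨kk, hkk⟩ := (hodd.pow : Odd (d ^ n))
    have := hd3 n hn
    constructor
    · omega
    · intro _ heq _
      omega
  · -- (ii)
    intro hsup n hn
    rw [Stable, if_neg (by simp [hoddpow n])]
    refine ⟨hne n, fun v hv => ?_⟩
    obtain ⟨c, hc, hcb⟩ := hsup v hv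
    obtain ⟨kk, hkk⟩ := (hodd.pow : Odd (d ^ n))
    have he3 := hd3 n hn
    have hmc := hcb n hn
    have hm2 : 2 * depth v (iter f n) < d ^ n := by
      have hdpos : (0:ℝ) < (d : ℝ) ^ n := by positivity
      have h1 : (depth v (iter f n) : ℝ) < (1 / 2) * (d : ℝ) ^ n :=
        lt_of_le_of_lt hmc (by nlinarith)
      have h2 : ((2 * depth v (iter f n) : ℕ) : ℝ) < ((d ^ n : ℕ) : ℝ) := by
        push_cast
        linarith
      exact_mod_cast h2
    refine ⟨by omega, ?_⟩
    intro hpos heq hfix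
    exfalso
    set m := depth v (iter f n) with hm
    have h2me : 2 * m = d ^ n - 1 := by omega
    set L := linForm v with hL
    have hgne : iter f n ≠ 0 := hne n
    obtain ⟨p, hp⟩ := (depth_spec hv hgne).1
    obtain ⟨q, hq⟩ := (depth_spec hv hgne).2
    obtain ⟨D, hD⟩ := fixed_seed hv hfix
    have hcancel : C v.2 * p - C v.1 * q = L * D := by
      have hLm : (L : MvPoly2) ^ m ≠ 0 := pow_ne_zero _ (linForm_ne_zero hv)
      apply mul_left_cancel₀ hLm
      have hside : L ^ m * (C v.2 * p - C v.1 * q)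
          = C v.2 * (iter f n).1 - C v.1 * (iter f n).2 := by
        rw [hp, hq]; ring
      rw [hside, hD, pow_succ]
      ring
    have hIH : ∀ j : ℕ, ∃ a b t : MvPoly2,
        (iter (iter f n) (j + 1)).1 = L ^ (m * ∑ i ∈ Finset.range (j + 1), (d ^ n) ^ i) * a ∧
        (iter (iter f n) (j + 1)).2 = L ^ (m * ∑ i ∈ Finset.range (j + 1), (d ^ n) ^ i) * b ∧
        C v.2 * a - C v.1 * b = L * t := by
      intro j
      induction j with
      | zero =>
          refine ⟨p, q, D, ?_, ?_, hcancel⟩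
          · show (comp (iter f n) (iter (iter f n) 0)).1 = _
            rw [show iter (iter f n) 0 = idPair from rfl, comp_idPair]
            simpa using hp
          · show (comp (iter f n) (iter (iter f n) 0)).2 = _
            rw [show iter (iter f n) 0 = idPair from rfl, comp_idPair]
            simpa using hq
      | succ j ih =>
          obtain ⟨a, b, t, ha, hb, ht⟩ := ih
          obtain ⟨a', b', t', ha', hb', ht'⟩ :=
            inv_step (hhom n).1 (hhom n).2 hp hq hcancel ha hb ht
          refine ⟨a', b', t', ?_, ?_, ht'⟩
          · show (comp (iter f n) (iter (iter f n) (j + 1))).1 = _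
            rw [ha', ← hL, ← hm]
            congr 2
            conv_rhs => rw [geom_sum_succ]
            ring
          · show (comp (iter f n) (iter (iter f n) (j + 1))).2 = _
            rw [hb', ← hL, ← hm]
            congr 2
            conv_rhs => rw [geom_sum_succ]
            ring
    have hdepth : ∀ j : ℕ,
        m * ∑ i ∈ Finset.range (j + 1), (d ^ n) ^ i ≤ depth v (iter f (n * (j + 1))) := by
      intro j
      obtain ⟨a, b, t, ha, hb, _⟩ := hIH j
      rw [iter_iter] at ha hb
      exact le_depth hv (hne (n * (j + 1))) ⟨a, ha⟩ ⟨b, hb⟩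
    -- real arithmetic
    have hcast0 : ((d ^ n : ℕ) : ℝ) = (d : ℝ) ^ n := by push_cast; rfl
    have heR : (1 : ℝ) < (d : ℝ) ^ n := by
      have h3 := (Nat.cast_le (α := ℝ)).mpr he3
      rw [hcast0] at h3
      norm_num at h3
      linarith
    have hbound : ∀ j : ℕ, ((d : ℝ) ^ n) ^ (j + 1) - 1
        ≤ 2 * c * ((d : ℝ) ^ n) ^ (j + 1) := by
      intro j
      have h1 : ((m * ∑ i ∈ Finset.range (j + 1), (d ^ n) ^ i : ℕ) : ℝ)
          ≤ c * ((d : ℝ) ^ n) ^ (j + 1) := by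
        refine le_trans (Nat.cast_le.mpr (hdepth j))
          (le_trans (hcb (n * (j + 1)) (by nlinarith [hn])) ?_)
        rw [← pow_mul]
      have hgeom : ((m * ∑ i ∈ Finset.range (j + 1), (d ^ n) ^ i : ℕ) : ℝ)
          = (m : ℝ) * ∑ i ∈ Finset.range (j + 1), ((d : ℝ) ^ n) ^ i := by
        push_cast
        rfl
      have hsum : ∑ i ∈ Finset.range (j + 1), ((d : ℝ) ^ n) ^ i
          = (((d : ℝ) ^ n) ^ (j + 1) - 1) / ((d : ℝ) ^ n - 1) :=
        geom_sum_eq (ne_of_gt heR) (j + 1)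
      have h2mR : 2 * (m : ℝ) = (d : ℝ) ^ n - 1 := by
        have h' : ((2 * m : ℕ) : ℝ) = ((d ^ n - 1 : ℕ) : ℝ) := by rw [h2me]
        rw [Nat.cast_sub (by omega : 1 ≤ d ^ n)] at h'
        push_cast at h'
        linarith
      have hkey : 2 * ((m : ℝ) * ∑ i ∈ Finset.range (j + 1), ((d : ℝ) ^ n) ^ i)
          = ((d : ℝ) ^ n) ^ (j + 1) - 1 := by
        rw [hsum]
        calc 2 * ((m : ℝ) * ((((d : ℝ) ^ n) ^ (j + 1) - 1) / ((d : ℝ) ^ n - 1)))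
            = (2 * (m : ℝ)) * ((((d : ℝ) ^ n) ^ (j + 1) - 1) / ((d : ℝ) ^ n - 1)) := by ring
          _ = ((d : ℝ) ^ n - 1) * ((((d : ℝ) ^ n) ^ (j + 1) - 1) / ((d : ℝ) ^ n - 1)) := by
              rw [h2mR]
          _ = ((d : ℝ) ^ n) ^ (j + 1) - 1 := by
              rw [← mul_div_assoc]
              exact mul_div_cancel_left₀ _ (sub_ne_zero.mpr (ne_of_gt heR))
      rw [hgeom] at h1
      linarith [h1, hkey]
    have h12 : (0 : ℝ) < 1 - 2 * c := by linarith
    obtain ⟨N, hN⟩ := pow_unbounded_of_one_lt (1 / (1 - 2 * c)) heR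
    have hNy : 1 / (1 - 2 * c) < ((d : ℝ) ^ n) ^ (N + 1) :=
      lt_of_lt_of_le hN (pow_le_pow_right₀ (le_of_lt heR) (by omega))
    have h1y : 1 < ((d : ℝ) ^ n) ^ (N + 1) * (1 - 2 * c) := by
      rw [div_lt_iff₀ h12] at hNy
      linarith
    have hexp : ((d : ℝ) ^ n) ^ (N + 1) * (1 - 2 * c)
        = ((d : ℝ) ^ n) ^ (N + 1) - 2 * c * ((d : ℝ) ^ n) ^ (N + 1) := by ring
    linarith [hbound N, h1y]
end
end

section
/- For every d ≥ 3 there exists a semistable degree-d pair lying in the indeterminacy locus I(d), while for d = 2 no degree-2 pair in I(2) is semistable. (Thus the intersection of the semistable locus with I(d) in Ratbar_d is empty if and only if d = 2.) -/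
noncomputable section

open MvPolynomial

/-! ### Auxiliary lemmas for the proof -/

namespace SemistableIndetAux

lemma eval_dvd_ne {A B : MvPoly2} (h : A ∣ B) (x : Fin 2 → ℂ)
    (hA : eval x A = 0) (hB : eval x B ≠ 0) : False := by
  obtain ⟨c, rfl⟩ := h
  simp [hA] at hB

lemma bound_aux {A B : MvPoly2} (hA : A ≠ 0) {k n : ℕ} (h : A ^ n ∣ A ^ k * B)
    (x : Fin 2 → ℂ) (hxA : eval x A = 0) (hxB : eval x B ≠ 0) : n ≤ k := by
  by_contra hlt
  push_neg at hlt
  have h1 : A ^ (k + 1) ∣ A ^ k * B := dvd_trans (pow_dvd_pow A hlt) h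
  rw [pow_succ] at h1
  have h2 : A ∣ B := (mul_dvd_mul_iff_left (pow_ne_zero k hA)).mp h1
  exact eval_dvd_ne h2 x hxA hxB

lemma pow_unit_mul_dvd_iff {c : ℂ} (hc : c ≠ 0) (A B : MvPoly2) (n : ℕ) :
    (C c * A) ^ n ∣ B ↔ A ^ n ∣ B := by
  rw [mul_pow, ← map_pow]
  exact IsUnit.mul_left_dvd ((isUnit_iff_ne_zero.mpr (pow_ne_zero n hc)).map (C : ℂ →+* MvPoly2))

lemma bdd_dvd {L F : MvPoly2} (hL : ¬ IsUnit L) (hF : F ≠ 0) :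
    BddAbove {n : ℕ | L ^ n ∣ F} := by
  obtain ⟨N, hN⟩ := FiniteMultiplicity.of_not_isUnit hL hF
  refine ⟨N, fun n hn => ?_⟩
  by_contra hlt
  push_neg at hlt
  exact hN (dvd_trans (pow_dvd_pow L hlt) hn)

lemma linForm_ne_zero {v : ℂ × ℂ} (hv : v ≠ 0) : linForm v ≠ 0 := by
  intro h
  have h1 := congrArg (eval ![1, 0]) h
  have h2 := congrArg (eval ![0, 1]) h
  simp [linForm] at h1 h2
  exact hv (Prod.ext_iff.mpr ⟨h2, h1⟩)

lemma linForm_not_unit (v : ℂ × ℂ) : ¬ IsUnit (linForm v) := by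
  intro h
  obtain ⟨c, hc⟩ : linForm v ∣ 1 := h.dvd
  have := congrArg (eval ![v.1, v.2]) hc
  simp [linForm] at this
  rw [show v.2 * v.1 - v.1 * v.2 = 0 by ring] at this
  simp at this

lemma homog2 (P : MvPoly2) (h : P.IsHomogeneous 2) :
    ∃ p q r : ℂ, P = C p * X 0 ^ 2 + C q * (X 0 * X 1) + C r * X 1 ^ 2 := by
  refine ⟨coeff (Finsupp.single 0 2) P, coeff (Finsupp.single 0 1 + Finsupp.single 1 1) P,
    coeff (Finsupp.single 1 2) P, ?_⟩
  have hXX : (X 0 * X 1 : MvPoly2) = monomial (Finsupp.single 0 1 + Finsupp.single 1 1) 1 := by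
    rw [X, X, monomial_mul, one_mul]
  ext m
  rw [coeff_add, coeff_add, hXX, X_pow_eq_monomial, X_pow_eq_monomial,
    coeff_C_mul, coeff_C_mul, coeff_C_mul, coeff_monomial, coeff_monomial, coeff_monomial]
  have hdeg : m.degree = m 0 + m 1 := by
    rw [Finsupp.degree_eq_sum, Fin.sum_univ_two]
  have hsingle : ∀ (s : Fin 2 →₀ ℕ), (s = m) ↔ (s 0 = m 0 ∧ s 1 = m 1) := by
    intro s
    constructor
    · rintro rfl; exact ⟨rfl, rfl⟩
    · rintro ⟨h0, h1⟩; ext i; fin_cases i <;> assumption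
  by_cases h2 : m 0 + m 1 = 2
  · rcases (show (m 0 = 2 ∧ m 1 = 0) ∨ (m 0 = 1 ∧ m 1 = 1) ∨ (m 0 = 0 ∧ m 1 = 2) by omega)
      with ⟨ha, hb⟩ | ⟨ha, hb⟩ | ⟨ha, hb⟩ <;>
    · have hm : m = Finsupp.single 0 (m 0) + Finsupp.single 1 (m 1) := by
        ext i; fin_cases i <;> simp [Finsupp.single_apply]
      simp [hsingle, Finsupp.single_apply, Finsupp.add_apply, ha, hb]
      rw [show m = _ from hm, ha, hb] <;> simp [Finsupp.single_apply]
  · rw [h.coeff_eq_zero (by omega : m.degree ≠ 2)]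
    simp only [hsingle, Finsupp.single_apply, Finsupp.add_apply]
    norm_num
    rw [if_neg (by omega), if_neg (by omega), if_neg (by omega)]
    ring

lemma aeval_quad (p0 p1 p2 : ℂ) (A B : MvPoly2) :
    aeval ![A, B] (C p0 * X 0 ^ 2 + C p1 * (X 0 * X 1) + C p2 * X 1 ^ 2)
      = C p0 * A ^ 2 + C p1 * (A * B) + C p2 * B ^ 2 := by
  simp [map_add, map_mul, map_pow, aeval_X, aeval_C, algebraMap_eq]

lemma dep_lemma (P Q : MvPoly2) (p0 p1 p2 : ℂ)
    (hrepr : P = C p0 * X 0 ^ 2 + C p1 * (X 0 * X 1) + C p2 * X 1 ^ 2)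
    (eq1 : C p0 * P ^ 2 + C p1 * (P * Q) + C p2 * Q ^ 2 = 0)
    (hne : ¬(P = 0 ∧ Q = 0)) :
    ∃ α β : ℂ, ¬(α = 0 ∧ β = 0) ∧ ∃ R : MvPoly2, R ≠ 0 ∧
      P = C α * R ∧ Q = C β * R ∧ (R = P ∨ R = Q) := by
  have hQcase : Q = 0 → ∃ α β : ℂ, ¬(α = 0 ∧ β = 0) ∧ ∃ R : MvPoly2, R ≠ 0 ∧
      P = C α * R ∧ Q = C β * R ∧ (R = P ∨ R = Q) := by
    intro hQ
    have hP : P ≠ 0 := fun h => hne ⟨h, hQ⟩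
    exact ⟨1, 0, by simp, P, hP, by simp, by simp [hQ], Or.inl rfl⟩
  have hPQ : ∀ t : ℂ, P = C t * Q → ∃ α β : ℂ, ¬(α = 0 ∧ β = 0) ∧ ∃ R : MvPoly2, R ≠ 0 ∧
      P = C α * R ∧ Q = C β * R ∧ (R = P ∨ R = Q) := by
    intro t ht
    by_cases hQ : Q = 0
    · exact hQcase hQ
    · exact ⟨t, 1, by simp, Q, hQ, ht, by simp, Or.inr rfl⟩
  by_cases h0 : p0 = 0
  · have key : Q * (C p1 * P + C p2 * Q) = 0 := by
      rw [h0, map_zero] at eq1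
      linear_combination eq1
    rcases mul_eq_zero.mp key with hQ | hlin
    · exact hQcase hQ
    · by_cases h1 : p1 = 0
      · by_cases h2 : p2 = 0
        · have hP : P = 0 := by rw [hrepr, h0, h1, h2]; simp
          have hQ : Q ≠ 0 := fun h => hne ⟨hP, h⟩
          exact ⟨0, 1, by simp, Q, hQ, by simp [hP], by simp, Or.inr rfl⟩
        · have hQ : Q = 0 := by
            rw [h1, map_zero, zero_mul, zero_add] at hlin
            rcases mul_eq_zero.mp hlin with h | h
            · exact absurd (by simpa using h) h2
            · exact h
          exact hQcase hQ
      · refine hPQ (-p2 / p1) ?_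
        apply mul_left_cancel₀ (show (C p1 : MvPoly2) ≠ 0 by simpa using h1)
        rw [← mul_assoc, ← map_mul]
        rw [show p1 * (-p2 / p1) = -p2 by field_simp]
        rw [map_neg]
        linear_combination hlin
  · obtain ⟨u, hu⟩ : ∃ u : ℂ, u ^ 2 = p1 ^ 2 - 4 * p0 * p2 :=
      IsAlgClosed.exists_pow_nat_eq _ zero_lt_two
    have hCu : (C u : MvPoly2) * C u = C p1 * C p1 - 4 * (C p0 * C p2) := by
      have : (C (u * u) : MvPoly2) = C (p1 * p1 - 4 * (p0 * p2)) :=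
        congrArg C (by linear_combination hu)
      simpa only [map_mul, map_sub, map_ofNat] using this
    have key : (C 2 * C p0 * P + (C p1 + C u) * Q) * (C 2 * C p0 * P + (C p1 - C u) * Q) = 0 := by
      have h4 : (C 2 * C 2 * C p0 : MvPoly2) * (C p0 * P ^ 2 + C p1 * (P * Q) + C p2 * Q ^ 2)
          = 0 := by rw [eq1, mul_zero]
      have h2 : (C 2 : MvPoly2) = 2 := map_ofNat (C : ℂ →+* MvPoly2) 2
      rw [h2] at h4 ⊢
      linear_combination h4 - Q ^ 2 * hCu
    have hp0C : (C (2 * p0) : MvPoly2) ≠ 0 := by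
      have h2p0 : (2 : ℂ) * p0 ≠ 0 := mul_ne_zero two_ne_zero h0
      simpa using h2p0
    rcases mul_eq_zero.mp key with hlin | hlin
    · refine hPQ (-(p1 + u) / (2 * p0)) ?_
      apply mul_left_cancel₀ hp0C
      rw [← mul_assoc, ← map_mul, show 2 * p0 * (-(p1 + u) / (2 * p0)) = -(p1 + u) by
        field_simp]
      rw [map_neg, map_add]
      have h2 : (C (2 * p0) : MvPoly2) = C 2 * C p0 := by
        rw [map_mul]
      rw [h2]
      linear_combination hlin
    · refine hPQ (-(p1 - u) / (2 * p0)) ?_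
      apply mul_left_cancel₀ hp0C
      rw [← mul_assoc, ← map_mul, show 2 * p0 * (-(p1 - u) / (2 * p0)) = -(p1 - u) by
        field_simp]
      rw [map_neg, map_sub]
      have h2 : (C (2 * p0) : MvPoly2) = C 2 * C p0 := by
        rw [map_mul]
      rw [h2]
      linear_combination hlin

lemma factor_lemma (R : MvPoly2) (r0 r1 r2 α β : ℂ)
    (hrepr : R = C r0 * X 0 ^ 2 + C r1 * (X 0 * X 1) + C r2 * X 1 ^ 2)
    (hk : r0 * α ^ 2 + r1 * α * β + r2 * β ^ 2 = 0)
    (hv : ¬(α = 0 ∧ β = 0)) : linForm (α, β) ∣ R := by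
  by_cases hβ : β = 0
  · have hα : α ≠ 0 := fun h => hv ⟨h, hβ⟩
    have hr0 : r0 = 0 := by
      rw [hβ] at hk
      simp at hk
      rcases hk with h | h
      · exact h
      · exact absurd h hα
    have h1 : linForm (α, β) ∣ C α * R := by
      refine ⟨-(C r1 * X 0 + C r2 * X 1), ?_⟩
      rw [hrepr, hr0, hβ]
      simp only [linForm, map_zero]
      ring
    exact (IsUnit.dvd_mul_left ((isUnit_iff_ne_zero.mpr hα).map (C : ℂ →+* MvPoly2))).mp h1
  · have hkC : (C r0 * C α ^ 2 + C r1 * C α * C β + C r2 * C β ^ 2 : MvPoly2) = 0 := by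
      have : (C (r0 * α ^ 2 + r1 * α * β + r2 * β ^ 2) : MvPoly2) = C 0 := congrArg C hk
      simpa only [map_add, map_mul, map_pow, map_zero] using this
    have h1 : linForm (α, β) ∣ C (β ^ 2) * R := by
      refine ⟨C (r0 * β) * X 0 + C (r1 * β + r0 * α) * X 1, ?_⟩
      rw [hrepr]
      simp only [linForm, map_add, map_mul, map_pow]
      linear_combination (X 1 ^ 2 : MvPoly2) * hkC
    exact (IsUnit.dvd_mul_left
      ((isUnit_iff_ne_zero.mpr (pow_ne_zero 2 hβ)).map (C : ℂ →+* MvPoly2))).mp h1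

lemma part1 (d : ℕ) (hd : 3 ≤ d) :
    ∃ f : Pair, IsDegPair d f ∧ IsIndet f ∧ Semistable d f := by
  obtain ⟨m, a, e, hm2, ha1, he1, hsum, ham, hem, hdm, hdm1⟩ :
      ∃ m a e : ℕ, 2 ≤ m ∧ 1 ≤ a ∧ 1 ≤ e ∧ a + e + 1 = d ∧ a ≤ m ∧ e + 1 = m ∧
        (d % 2 = 0 → d / 2 = m) ∧ (d + 1) / 2 = m :=
    ⟨(d + 1) / 2, d - (d + 1) / 2, (d + 1) / 2 - 1, by omega⟩
  set P : MvPoly2 := X 0 ^ a * (X 1 ^ e * (X 0 - X 1)) with hPdef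
  set f : Pair := (P, 0) with hfdef
  have hX0 : (X 0 : MvPoly2) ≠ 0 := X_ne_zero _
  have hX1 : (X 1 : MvPoly2) ≠ 0 := X_ne_zero _
  have hX01 : (X 0 - X 1 : MvPoly2) ≠ 0 := by
    intro h
    have := congrArg (eval ![1, 0]) h
    simp at this
  have hPne : P ≠ 0 :=
    mul_ne_zero (pow_ne_zero _ hX0) (mul_ne_zero (pow_ne_zero _ hX1) hX01)
  have hfne : f ≠ 0 := by
    simp [hfdef, Prod.ext_iff, hPne]
  -- homogeneity
  have hhom : P.IsHomogeneous d := by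
    have h1 : ((X 0 : MvPoly2) ^ a).IsHomogeneous (1 * a) := (isHomogeneous_X ℂ 0).pow a
    have h2 : ((X 1 : MvPoly2) ^ e).IsHomogeneous (1 * e) := (isHomogeneous_X ℂ 1).pow e
    have h3 : (X 0 - X 1 : MvPoly2).IsHomogeneous 1 :=
      (isHomogeneous_X ℂ 0).sub (isHomogeneous_X ℂ 1)
    have := h1.mul (h2.mul h3)
    have hn : 1 * a + (1 * e + 1) = d := by omega
    rwa [hn] at this
  -- indeterminacy
  have hindet : IsIndet f := by
    unfold IsIndet comp
    have h1 : aeval ![f.1, f.2] f.1 = 0 := by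
      simp only [hfdef, hPdef]
      rw [map_mul, map_mul, map_pow, map_pow, map_sub, aeval_X, aeval_X]
      simp [zero_pow (by omega : e ≠ 0)]
    have h2 : aeval ![f.1, f.2] f.2 = 0 := by simp [hfdef]
    rw [h1, h2]
    rfl
  -- depth sets
  have hdepth_set : ∀ v : ℂ × ℂ, depth v f = sSup {n : ℕ | linForm v ^ n ∣ P} := by
    intro v
    unfold depth
    congr 1
    ext n
    simp [hfdef]
  have hzero_mem : ∀ (L F : MvPoly2), 0 ∈ {n : ℕ | L ^ n ∣ F} := by
    intro L F; simp [Set.mem_setOf_eq]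
  -- main stability
  have hstable : StableAt m f := by
    refine ⟨hfne, fun v hv => ?_⟩
    obtain ⟨x, y⟩ := v
    have hv' : ¬(x = 0 ∧ y = 0) := by
      intro ⟨h1, h2⟩; exact hv (by simp [Prod.ext_iff, h1, h2])
    rw [hdepth_set]
    by_cases hx : x = 0
    · -- linForm = C y * X 0, depth = a
      have hy : y ≠ 0 := fun h => hv' ⟨hx, h⟩
      have hL : linForm (x, y) = C y * X 0 := by simp [linForm, hx]
      have hbound : ∀ n ∈ {n : ℕ | linForm (x, y) ^ n ∣ P}, n ≤ a := by
        intro n hn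
        rw [Set.mem_setOf_eq, hL, pow_unit_mul_dvd_iff hy] at hn
        exact bound_aux hX0 hn ![0, 1] (by simp) (by simp)
      have hmem : a ∈ {n : ℕ | linForm (x, y) ^ n ∣ P} := by
        rw [Set.mem_setOf_eq, hL, pow_unit_mul_dvd_iff hy]
        exact Dvd.intro _ rfl
      have hda : sSup {n : ℕ | linForm (x, y) ^ n ∣ P} = a :=
        le_antisymm (csSup_le ⟨0, hzero_mem _ _⟩ hbound) (le_csSup ⟨a, hbound⟩ hmem)
      rw [hda]
      refine ⟨ham, fun _ _ => ?_⟩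
      -- not a fixed hole : ord ≤ a
      unfold FixedHole
      rw [hdepth_set, hda]
      have hford : ∀ n ∈ {n : ℕ | linForm (x, y) ^ n ∣ fixedForm f}, n ≤ a := by
        intro n hn
        rw [Set.mem_setOf_eq, hL, pow_unit_mul_dvd_iff hy] at hn
        have hff : fixedForm f = -(X 0 ^ a * (X 1 ^ (e + 1) * (X 0 - X 1))) := by
          simp only [fixedForm, hfdef, hPdef]
          ring
        rw [hff, dvd_neg] at hn
        exact bound_aux hX0 hn ![0, 1] (by simp) (by simp)
      have : ord (x, y) (fixedForm f) ≤ a := csSup_le ⟨0, hzero_mem _ _⟩ hford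
      omega
    · by_cases hy : y = 0
      · -- linForm = C (-x) * X 1, depth ≤ e < m
        have hL : linForm (x, y) = C (-x) * X 1 := by
          simp only [linForm, hy, map_zero, map_neg]
          ring
        have hbound : ∀ n ∈ {n : ℕ | linForm (x, y) ^ n ∣ P}, n ≤ e := by
          intro n hn
          rw [Set.mem_setOf_eq, hL, pow_unit_mul_dvd_iff (neg_ne_zero.mpr hx)] at hn
          have hP' : P = X 1 ^ e * (X 0 ^ a * (X 0 - X 1)) := by rw [hPdef]; ring
          rw [hP'] at hn
          exact bound_aux hX1 hn ![1, 0] (by simp) (by simp)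
        have hle : sSup {n : ℕ | linForm (x, y) ^ n ∣ P} ≤ e :=
          csSup_le ⟨0, hzero_mem _ _⟩ hbound
        exact ⟨by omega, fun _ h2 => absurd h2 (by omega)⟩
      · by_cases hxy : x = y
        · -- linForm = C y * (X 0 - X 1), depth ≤ 1 < m
          have hL : linForm (x, y) = C y * (X 0 - X 1) := by
            simp only [linForm, hxy]
            ring
          have hbound : ∀ n ∈ {n : ℕ | linForm (x, y) ^ n ∣ P}, n ≤ 1 := by
            intro n hn
            rw [Set.mem_setOf_eq, hL, pow_unit_mul_dvd_iff hy] at hn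
            have hP' : P = (X 0 - X 1) ^ 1 * (X 0 ^ a * X 1 ^ e) := by rw [hPdef]; ring
            rw [hP'] at hn
            exact bound_aux hX01 hn ![1, 1] (by simp) (by simp)
          have hle : sSup {n : ℕ | linForm (x, y) ^ n ∣ P} ≤ 1 :=
            csSup_le ⟨0, hzero_mem _ _⟩ hbound
          exact ⟨by omega, fun _ h2 => absurd h2 (by omega)⟩
        · -- generic : depth = 0
          have hbound : ∀ n ∈ {n : ℕ | linForm (x, y) ^ n ∣ P}, n ≤ 0 := by
            intro n hn
            rw [Set.mem_setOf_eq] at hn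
            have hLne : linForm (x, y) ≠ 0 := by
              intro h
              have := congrArg (eval ![1, 0]) h
              simp [linForm] at this
              exact hy this
            have hn' : linForm (x, y) ^ n ∣ linForm (x, y) ^ 0 * P := by
              rwa [pow_zero, one_mul]
            refine bound_aux hLne hn' ![x, y] (by simp [linForm]; ring) ?_
            have heval : eval ![x, y] P = x ^ a * (y ^ e * (x - y)) := by simp [hPdef]
            rw [heval]
            exact mul_ne_zero (pow_ne_zero _ hx)
              (mul_ne_zero (pow_ne_zero _ hy) (sub_ne_zero_of_ne hxy))
          have hle : sSup {n : ℕ | linForm (x, y) ^ n ∣ P} ≤ 0 :=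
            csSup_le ⟨0, hzero_mem _ _⟩ hbound
          exact ⟨by omega, fun h1 _ => absurd h1 (by omega)⟩
  refine ⟨f, ⟨hhom, isHomogeneous_zero _ _ _, hfne⟩, hindet, ?_⟩
  unfold Semistable
  split_ifs with hpar
  · rw [hdm hpar]; exact hstable
  · rw [hdm1]; exact hstable

lemma part2 (f : Pair) (hdeg : IsDegPair 2 f) (hI : IsIndet f) : ¬ Semistable 2 f := by
  obtain ⟨hP2, hQ2, hfne⟩ := hdeg
  intro hss
  have hst : StableAt 1 f := by
    unfold Semistable at hss
    norm_num at hss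
    exact hss
  obtain ⟨p0, p1, p2, hPrepr⟩ := homog2 f.1 hP2
  have hI' := hI
  unfold IsIndet comp at hI'
  rw [Prod.mk_eq_zero] at hI'
  obtain ⟨hI1, hI2⟩ := hI'
  have eq1 : C p0 * f.1 ^ 2 + C p1 * (f.1 * f.2) + C p2 * f.2 ^ 2 = 0 := by
    have h := aeval_quad p0 p1 p2 f.1 f.2
    rw [← hPrepr] at h
    exact h.symm.trans hI1
  have hne' : ¬(f.1 = 0 ∧ f.2 = 0) := by
    intro ⟨h1, h2⟩
    apply hfne
    rw [Prod.ext_iff]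
    exact ⟨h1, h2⟩
  obtain ⟨α, β, hαβ, R, hR, hPα, hQβ, hRPQ⟩ := dep_lemma f.1 f.2 p0 p1 p2 hPrepr eq1 hne'
  have hRhom : R.IsHomogeneous 2 := by
    rcases hRPQ with h | h <;> rw [h]
    · exact hP2
    · exact hQ2
  obtain ⟨r0, r1, r2, hRrepr⟩ := homog2 R hRhom
  have haeR : aeval ![C α * R, C β * R] R
      = C (r0 * α ^ 2 + r1 * α * β + r2 * β ^ 2) * R ^ 2 := by
    have h := aeval_quad r0 r1 r2 (C α * R) (C β * R)
    rw [← hRrepr] at h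
    rw [h]
    simp only [map_add, map_mul, map_pow]
    ring
  have haC : ∀ (c : ℂ), aeval ![C α * R, C β * R] (C c) = (C c : MvPoly2) := by
    intro c; rw [aeval_C, algebraMap_eq]
  have hRR : R ^ 2 ≠ 0 := pow_ne_zero 2 hR
  have hk0 : r0 * α ^ 2 + r1 * α * β + r2 * β ^ 2 = 0 := by
    rcases not_and_or.mp hαβ with hα | hβ
    · rw [hPα, hQβ] at hI1
      rw [map_mul, haC, haeR] at hI1
      rcases mul_eq_zero.mp hI1 with h | h
      · exact absurd (by simpa using h) hα
      · rcases mul_eq_zero.mp h with h' | h'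
        · exact C_eq_zero.mp h'
        · exact absurd h' hRR
    · rw [hPα, hQβ] at hI2
      rw [map_mul, haC, haeR] at hI2
      rcases mul_eq_zero.mp hI2 with h | h
      · exact absurd (by simpa using h) hβ
      · rcases mul_eq_zero.mp h with h' | h'
        · exact C_eq_zero.mp h'
        · exact absurd h' hRR
  have hLR : linForm (α, β) ∣ R := factor_lemma R r0 r1 r2 α β hRrepr hk0 hαβ
  have hv : ((α, β) : ℂ × ℂ) ≠ 0 := by
    intro h
    rw [Prod.ext_iff] at h
    exact hαβ ⟨h.1, h.2⟩
  obtain ⟨-, hall⟩ := hst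
  obtain ⟨hdle, hnofix⟩ := hall (α, β) hv
  have hL1 : linForm (α, β) ∣ f.1 := by
    rw [hPα]; exact hLR.mul_left (C α)
  have hL2 : linForm (α, β) ∣ f.2 := by
    rw [hQβ]; exact hLR.mul_left (C β)
  have hmem1 : 1 ∈ {n : ℕ | linForm (α, β) ^ n ∣ f.1 ∧ linForm (α, β) ^ n ∣ f.2} := by
    simp only [Set.mem_setOf_eq, pow_one]
    exact ⟨hL1, hL2⟩
  have hFne : f.1 ≠ 0 ∨ f.2 ≠ 0 := by
    rcases not_and_or.mp hαβ with hα | hβ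
    · left; rw [hPα]; exact mul_ne_zero (by simpa using hα) hR
    · right; rw [hQβ]; exact mul_ne_zero (by simpa using hβ) hR
  have hbddS : BddAbove {n : ℕ | linForm (α, β) ^ n ∣ f.1 ∧ linForm (α, β) ^ n ∣ f.2} := by
    rcases hFne with h | h
    · exact BddAbove.mono (fun n hn => hn.1) (bdd_dvd (linForm_not_unit _) h)
    · exact BddAbove.mono (fun n hn => hn.2) (bdd_dvd (linForm_not_unit _) h)
  have hd1 : 1 ≤ depth (α, β) f := le_csSup hbddS hmem1
  have hdeq : depth (α, β) f = 1 := le_antisymm hdle hd1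
  have hnf := hnofix (by omega) hdeq
  have hfixform : fixedForm f = linForm (α, β) * R := by
    rw [fixedForm, hPα, hQβ]
    simp only [linForm]
    ring
  obtain ⟨R', hR'⟩ := hLR
  have hmem2 : 2 ∈ {n : ℕ | linForm (α, β) ^ n ∣ fixedForm f} := by
    refine ⟨R', ?_⟩
    rw [hfixform, hR']
    ring
  have hffne : fixedForm f ≠ 0 := by
    rw [hfixform]
    exact mul_ne_zero (linForm_ne_zero hv) hR
  have hord : 2 ≤ ord (α, β) (fixedForm f) :=
    le_csSup (bdd_dvd (linForm_not_unit _) hffne) hmem2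
  apply hnf
  unfold FixedHole
  omega

end SemistableIndetAux


/-- For every `d ≥ 3` there is a semistable degree-`d` pair in the indeterminacy locus
`I(d)`, while no degree-2 pair in `I(2)` is semistable. -/
theorem semistable_indeterminacy_iff_degree_ne_two :
    (∀ d : ℕ, 3 ≤ d → ∃ f : Pair, IsDegPair d f ∧ IsIndet f ∧ Semistable d f) ∧
    (∀ f : Pair, IsDegPair 2 f → IsIndet f → ¬ Semistable 2 f) :=
  ⟨SemistableIndetAux.part1, SemistableIndetAux.part2⟩
end
end
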